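/- arXiv:2403.07477 — 11 statements merged into one kernel-verified Lean document; each statement's English description precedes it below -/
import Mathlib

section
/- Let m ≥ 2 and let n = km + j with j ∈ {0,…,m-1} and k ∈ {0,…,m-1} (i.e., n < m²). Then p_m(n,t) = t^{k+j} · (t^{(m-1)(k+1)} - 1)/(t^{m-1} - 1), where the fraction denotes the polynomial 1 + t^{m-1} + ⋯ + t^{(m-1)k}. -/
noncomputable def pm (m : ℕ) : ℕ → Polynomial ℤ
  | 0 => 1
  | n + 1 =>
      Polynomial.X * pm m n +
        if h : 2 ≤ m ∧ m ∣ (n + 1) then pm m ((n + 1) / m) else 0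
decreasing_by
  · exact Nat.lt_succ_self n
  · exact Nat.div_lt_self (Nat.succ_pos n) (by omega)

open Polynomial

lemma pm_zero (m : ℕ) : pm m 0 = 1 := by rw [pm]

lemma pm_succ_not_dvd (m n : ℕ) (h : ¬ m ∣ (n + 1)) : pm m (n + 1) = X * pm m n := by
  rw [pm, dif_neg (by tauto)]; ring

lemma pm_succ_dvd (m n : ℕ) (hm : 2 ≤ m) (h : m ∣ (n + 1)) :
    pm m (n + 1) = X * pm m n + pm m ((n + 1) / m) := by
  rw [pm, dif_pos ⟨hm, h⟩]

lemma pm_pow (m : ℕ) (hm : 2 ≤ m) : ∀ j, j < m → pm m j = X ^ j := by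
  intro j
  induction j with
  | zero => intro _; simpa using pm_zero m
  | succ j ih =>
    intro hj
    rw [pm_succ_not_dvd m j (fun hd => by
      have := Nat.le_of_dvd (Nat.succ_pos j) hd; omega), ih (by omega), pow_succ]
    ring

lemma pm_add_j (m n : ℕ) (h : m ∣ n) : ∀ j, j < m → pm m (n + j) = X ^ j * pm m n := by
  intro j
  induction j with
  | zero => intro _; simp
  | succ j ih =>
    intro hj
    have hnd : ¬ m ∣ (n + j + 1) := by
      intro hd
      have : m ∣ (j + 1) := (Nat.dvd_add_right h).mp (by simpa [Nat.add_assoc] using hd)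
      have := Nat.le_of_dvd (Nat.succ_pos j) this; omega
    have : n + (j + 1) = (n + j) + 1 := by omega
    rw [this, pm_succ_not_dvd m (n + j) hnd, ih (by omega), pow_succ]
    ring

lemma pm_mul (m : ℕ) (hm : 2 ≤ m) :
    ∀ k, k < m → pm m (k * m) = X ^ k * ∑ i ∈ Finset.range (k + 1), X ^ ((m - 1) * i) := by
  intro k
  induction k with
  | zero => intro _; simpa using pm_zero m
  | succ k ih =>
    intro hk
    have he : (k + 1) * m = (k * m + (m - 1)) + 1 := by
      have : 1 ≤ m := by omega
      cases Nat.exists_eq_add_of_le this with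
      | intro c hc => subst hc; ring_nf; omega
    have hd : m ∣ (k * m + (m - 1)) + 1 := by rw [← he]; exact ⟨k + 1, by ring⟩
    have hdiv : ((k * m + (m - 1)) + 1) / m = k + 1 := by
      rw [← he]; exact Nat.mul_div_cancel _ (by omega : 0 < m)
    rw [he, pm_succ_dvd m _ hm hd, hdiv,
      pm_add_j m (k * m) ⟨k, mul_comm k m⟩ (m - 1) (by omega),
      ih (by omega), pm_pow m hm (k + 1) hk]
    rw [Finset.sum_range_succ' _ (k + 1)]
    have hmul : ∀ i : ℕ, (m - 1) * (i + 1) = (m - 1) + (m - 1) * i := by intro i; ring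
    have hX : ∀ i : ℕ, (X : Polynomial ℤ) ^ ((m - 1) * (i + 1)) = X ^ (m - 1) * X ^ ((m - 1) * i) := by
      intro i; rw [hmul, pow_add]
    simp only [hX, ← Finset.mul_sum]
    have hexp : 1 + ((m - 1) + k) = (k + 1) + (m - 1) := by omega
    rw [mul_add]
    have : (X : Polynomial ℤ) * (X ^ (m - 1) * (X ^ k *
        ∑ i ∈ Finset.range (k + 1), X ^ ((m - 1) * i))) =
        X ^ ((k + 1) + (m - 1)) * ∑ i ∈ Finset.range (k + 1), X ^ ((m - 1) * i) := by
      rw [← hexp]; rw [pow_add, pow_add]; ring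
    rw [this, pow_add]
    ring

/-- For n = km + j < m², an explicit formula for p_m(n,t). -/
theorem pm_small (m k j : ℕ) (hm : 2 ≤ m) (hj : j < m) (hk : k < m) :
    pm m (k * m + j) =
      Polynomial.X ^ (k + j) * ∑ i ∈ Finset.range (k + 1), Polynomial.X ^ ((m - 1) * i) := by
  rw [pm_add_j m (k * m) ⟨k, mul_comm k m⟩ j hj, pm_mul m hm k hk, pow_add]
  ring
end

section
/- Let m ≥ 2. For every natural number n, the order of vanishing at t=0 of the m-ary partition polynomial p_m(n,t) equals s_m(n), the sum of digits of n in base m. -/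
open Polynomial

lemma pm_monic (m : ℕ) (hm : 2 ≤ m) : ∀ n, (pm m n).Monic ∧ (pm m n).natDegree = n := by
  intro n
  induction n using Nat.strong_induction_on with
  | _ n ih =>
    match n with
    | 0 => rw [pm]; exact ⟨monic_one, natDegree_one⟩
    | n + 1 =>
      rw [pm]
      obtain ⟨hmon, hdeg⟩ := ih n (Nat.lt_succ_self n)
      have hXmon : (X * pm m n).Monic := (monic_X).mul hmon
      have hXdeg : (X * pm m n).natDegree = n + 1 := by
        rw [natDegree_mul X_ne_zero hmon.ne_zero, natDegree_X, hdeg]; omega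
      by_cases h : 2 ≤ m ∧ m ∣ (n + 1)
      · rw [dif_pos h]
        have hk : (n + 1) / m < n + 1 := Nat.div_lt_self (Nat.succ_pos n) (by omega)
        obtain ⟨hmon', hdeg'⟩ := ih _ hk
        have : (pm m ((n + 1) / m)).natDegree < (X * pm m n).natDegree := by
          rw [hXdeg, hdeg']; exact hk
        refine ⟨?_, ?_⟩
        · exact hXmon.add_of_left (by rwa [degree_eq_natDegree hXmon.ne_zero,
            degree_eq_natDegree hmon'.ne_zero, Nat.cast_lt])
        · rw [natDegree_add_eq_left_of_natDegree_lt this, hXdeg]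
      · rw [dif_neg h, add_zero]; exact ⟨hXmon, hXdeg⟩

lemma pm_ne_zero (m : ℕ) (hm : 2 ≤ m) (n : ℕ) : pm m n ≠ 0 :=
  (pm_monic m hm n).1.ne_zero

/-- digit sum recursion -/
lemma dsum_rec (m : ℕ) (hm : 2 ≤ m) (n : ℕ) (hn : 0 < n) :
    (Nat.digits m n).sum = n % m + (Nat.digits m (n / m)).sum := by
  rw [Nat.digits_def' (by omega : 1 < m) hn, List.sum_cons]

/-- incrementing by one increases digit sum by at most one -/
lemma dsum_succ_le (m : ℕ) (hm : 2 ≤ m) : ∀ k, (Nat.digits m (k + 1)).sum ≤ (Nat.digits m k).sum + 1 := by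
  intro k
  induction k using Nat.strong_induction_on with
  | _ k ih =>
    by_cases h : m ∣ (k + 1)
    · obtain ⟨j, hj⟩ := h
      have hj1 : 1 ≤ j := by nlinarith
      obtain ⟨i, rfl⟩ : ∃ i, j = i + 1 := ⟨j - 1, by omega⟩
      have hmi : m * (i + 1) = m * i + m := by ring
      have hk1 : 1 ≤ k := by omega
      have hk : k = m * i + (m - 1) := by omega
      have h1 : (Nat.digits m (k + 1)).sum = (Nat.digits m (i + 1)).sum := by
        rw [dsum_rec m hm _ (by omega), hj, Nat.mul_mod_right,
          Nat.mul_div_cancel_left _ (by omega : 0 < m), zero_add]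
      have h2 : (Nat.digits m k).sum = (m - 1) + (Nat.digits m i).sum := by
        rw [dsum_rec m hm k (by omega), hk,
          Nat.mul_add_div (by omega : 0 < m), Nat.div_eq_of_lt (by omega), add_zero,
          Nat.mul_add_mod, Nat.mod_eq_of_lt (by omega : m - 1 < m)]
      rw [h1, h2]
      have hih := ih i (by nlinarith)
      omega
    · rw [dsum_rec m hm (k + 1) (by omega)]
      have hne : (k + 1) % m ≠ 0 := fun hc => h (Nat.dvd_of_mod_eq_zero hc)
      rcases Nat.eq_zero_or_pos k with hk | hk
      · subst hk; simp [Nat.mod_eq_of_lt (by omega : 1 < m), Nat.div_eq_of_lt (by omega : 1 < m)]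
      rw [dsum_rec m hm k hk]
      have hmod : (k + 1) % m = k % m + 1 := by
        have h1 : k % m < m := Nat.mod_lt _ (by omega)
        have h2 : (k + 1) % m = (k % m + 1) % m := by
          conv_lhs => rw [← Nat.mod_add_mod]
        rcases Nat.lt_or_ge (k % m + 1) m with hlt | hge
        · rw [h2, Nat.mod_eq_of_lt hlt]
        · exfalso; have : k % m + 1 = m := by omega
          rw [h2, this, Nat.mod_self] at hne; exact hne rfl
      have hdiv : (k + 1) / m = k / m := by
        rw [Nat.succ_div, if_neg h, Nat.add_zero]
      rw [hmod, hdiv]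
      omega

lemma rootMultiplicity_add_of_lt {p q : Polynomial ℤ} (hp : p ≠ 0) (hq : q ≠ 0)
    (h : rootMultiplicity 0 q < rootMultiplicity 0 p) :
    rootMultiplicity 0 (p + q) = rootMultiplicity 0 q := by
  have hpq : p + q ≠ 0 := by
    intro hc
    have : q = -p := by linear_combination hc
    rw [this, rootMultiplicity_eq_natTrailingDegree', rootMultiplicity_eq_natTrailingDegree',
      natTrailingDegree_neg] at h
    exact lt_irrefl _ h
  refine le_antisymm ?_ ?_
  · rw [rootMultiplicity_le_iff hpq]
    intro hdvd
    have hdp : (X - C (0:ℤ)) ^ (rootMultiplicity 0 q + 1) ∣ p :=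
      (pow_dvd_pow _ (by omega)).trans (pow_rootMultiplicity_dvd p 0)
    have : (X - C (0:ℤ)) ^ (rootMultiplicity 0 q + 1) ∣ q := by
      have := dvd_sub hdvd hdp
      simpa using this
    exact pow_rootMultiplicity_not_dvd hq 0 this
  · rw [le_rootMultiplicity_iff hpq]
    refine dvd_add ?_ (pow_rootMultiplicity_dvd q 0)
    exact (pow_dvd_pow _ (le_of_lt h)).trans (pow_rootMultiplicity_dvd p 0)

/-- The order of vanishing of p_m(n,t) at t = 0 equals the base-m digit sum of n. -/
theorem rootMultiplicity_pm (m : ℕ) (hm : 2 ≤ m) (n : ℕ) :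
    Polynomial.rootMultiplicity 0 (pm m n) = (Nat.digits m n).sum := by
  induction n using Nat.strong_induction_on with
  | _ n ih =>
    match n with
    | 0 => rw [pm]; simp
    | n + 1 =>
      rw [pm]
      have ihn := ih n (Nat.lt_succ_self n)
      have hXmul : rootMultiplicity 0 (X * pm m n) = 1 + rootMultiplicity 0 (pm m n) := by
        rw [rootMultiplicity_mul (mul_ne_zero X_ne_zero (pm_ne_zero m hm n))]
        congr 1
        rw [rootMultiplicity_eq_natTrailingDegree', natTrailingDegree_X]
      by_cases h : 2 ≤ m ∧ m ∣ (n + 1)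
      · rw [dif_pos h]
        obtain ⟨j, hj⟩ := h.2
        have hj1 : 1 ≤ j := by nlinarith
        obtain ⟨i, rfl⟩ : ∃ i, j = i + 1 := ⟨j - 1, by omega⟩
        have hmi : m * (i + 1) = m * i + m := by ring
        have hn1 : 1 ≤ n := by omega
        have hkn : n = m * i + (m - 1) := by omega
        have hdivj : (n + 1) / m = i + 1 := by
          rw [hj, Nat.mul_div_cancel_left _ (by omega : 0 < m)]
        have hklt : (n + 1) / m < n + 1 := Nat.div_lt_self (Nat.succ_pos n) (by omega)
        have ihk := ih _ hklt
        -- digit sums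
        have hsn : (Nat.digits m n).sum = (m - 1) + (Nat.digits m i).sum := by
          rw [dsum_rec m hm n (by omega), hkn,
            Nat.mul_add_div (by omega : 0 < m), Nat.div_eq_of_lt (by omega), add_zero,
            Nat.mul_add_mod, Nat.mod_eq_of_lt (by omega : m - 1 < m)]
        have hsn1 : (Nat.digits m (n + 1)).sum = (Nat.digits m (i + 1)).sum := by
          rw [dsum_rec m hm _ (by omega), hdivj, hj, Nat.mul_mod_right, zero_add]
        have hle : (Nat.digits m (i + 1)).sum ≤ (Nat.digits m i).sum + 1 :=
          dsum_succ_le m hm i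
        have hlt : rootMultiplicity 0 (pm m ((n + 1) / m)) <
            rootMultiplicity 0 (X * pm m n) := by
          rw [hXmul, ihn, ihk, hdivj, hsn]; omega
        rw [rootMultiplicity_add_of_lt (mul_ne_zero X_ne_zero (pm_ne_zero m hm n))
          (pm_ne_zero m hm _) hlt, ihk, hdivj, hsn1]
      · rw [dif_neg h, add_zero, hXmul, ihn]
        have hnd : ¬ m ∣ (n + 1) := fun hd => h ⟨hm, hd⟩
        have hne : (n + 1) % m ≠ 0 := fun hc => hnd (Nat.dvd_of_mod_eq_zero hc)
        rw [dsum_rec m hm (n + 1) (by omega)]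
        rcases Nat.eq_zero_or_pos n with hk | hk
        · subst hk
          simp [Nat.mod_eq_of_lt (by omega : 1 < m), Nat.div_eq_of_lt (by omega : 1 < m)]
        rw [dsum_rec m hm n hk]
        have hmod : (n + 1) % m = n % m + 1 := by
          have h1 : n % m < m := Nat.mod_lt _ (by omega)
          have h2 : (n + 1) % m = (n % m + 1) % m := by
            conv_lhs => rw [← Nat.mod_add_mod]
          rcases Nat.lt_or_ge (n % m + 1) m with hlt | hge
          · rw [h2, Nat.mod_eq_of_lt hlt]
          · exfalso; have : n % m + 1 = m := by omega
            rw [h2, this, Nat.mod_self] at hne; exact hne rfl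
        have hdiv : (n + 1) / m = n / m := by
          rw [Nat.succ_div, if_neg hnd, Nat.add_zero]
        rw [hmod, hdiv]
        omega
end

section
/- Let m ≥ 2 be even and let n = a_0 + a_1 m + ⋯ + a_k m^k be the base m representation of n. Then p_m(n,-1) = (-1)^{a_0} ∏_{j=1}^{k} (1+(-1)^{a_j})/2. In particular, p_m(n,-1) ∈ {-1,0,1}, and p_m(n,-1) = 0 if and only if some digit a_j with j ≥ 1 is odd. -/
def Ee (m n : ℕ) : ℤ := if ∀ d ∈ Nat.digits m n, Even d then 1 else 0

lemma Ee_zero (m : ℕ) : Ee m 0 = 1 := by simp [Ee]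

lemma Ee_rec (m n : ℕ) (hm : 2 ≤ m) (hn : 0 < n) :
    Ee m n = if Even (n % m) then Ee m (n / m) else 0 := by
  unfold Ee
  rw [Nat.digits_def' (by omega : 1 < m) hn]
  by_cases h : Even (n % m) <;> simp [h]

lemma Ee_digit (m b M : ℕ) (hm : 2 ≤ m) (hb : b < m) :
    Ee m (b + m * M) = (if Even b then 1 else 0) * Ee m M := by
  rcases Nat.eq_zero_or_pos (b + m * M) with h | h
  · have hb0 : b = 0 := by omega
    have hM0 : M = 0 := by
      rcases Nat.eq_zero_or_pos M with h' | h'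
      · exact h'
      · exfalso; nlinarith
    simp [hb0, hM0, Ee_zero]
  · rw [Ee_rec m _ hm h]
    have h1 : (b + m * M) % m = b := by
      rw [Nat.add_mul_mod_self_left, Nat.mod_eq_of_lt hb]
    have h2 : (b + m * M) / m = M := by
      rw [Nat.add_mul_div_left _ _ (by omega : 0 < m), Nat.div_eq_of_lt hb, Nat.zero_add]
    rw [h1, h2]
    by_cases hb' : Even b <;> simp [hb']

lemma Ee_step (m q : ℕ) (hm : 2 ≤ m) (hme : Even m) :
    Ee m q + (-1 : ℤ) ^ ((q + 1) % m) * Ee m ((q + 1) / m) = Ee m (q + 1) := by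
  have hm0 : 0 < m := by omega
  have hm2 : m % 2 = 0 := Nat.even_iff.mp hme
  by_cases hd : m ∣ q + 1
  · obtain ⟨s, hs⟩ := hd
    obtain ⟨s', rfl⟩ : ∃ s', s = s' + 1 := by
      rcases s with _ | s'
      · simp at hs
      · exact ⟨s', rfl⟩
    have hq : q = m * s' + (m - 1) := by
      have hms : m * (s' + 1) = m * s' + m := by ring
      omega
    have e1 : (q + 1) % m = 0 := by rw [hs]; exact Nat.mul_mod_right m _
    have e2 : (q + 1) / m = s' + 1 := by rw [hs]; exact Nat.mul_div_cancel_left _ hm0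
    have e3 : q % m = m - 1 := by
      rw [hq, add_comm, Nat.add_mul_mod_self_left, Nat.mod_eq_of_lt (by omega)]
    have e4 : q / m = s' := by
      rw [hq, add_comm, Nat.add_mul_div_left _ _ hm0, Nat.div_eq_of_lt (by omega), Nat.zero_add]
    have hq1 : 0 < q := by omega
    rw [Ee_rec m (q + 1) hm (by omega), e1, e2, if_pos (by simp),
      Ee_rec m q hm hq1, e3, e4, if_neg (by rw [Nat.even_iff]; omega)]
    simp
  · have e2 : (q + 1) / m = q / m := Nat.succ_div_of_not_dvd hd
    have e1 : (q + 1) % m = q % m + 1 := by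
      have d1 := Nat.div_add_mod q m
      have d2 := Nat.div_add_mod (q + 1) m
      rw [e2] at d2
      omega
    rw [e1, e2, Ee_rec m (q + 1) hm (by omega), e1, e2]
    by_cases hev : Even (q % m + 1)
    · have hq1 : 0 < q := by
        rcases Nat.eq_zero_or_pos q with h | h
        · exfalso; rw [h, Nat.zero_mod] at hev; simp at hev
        · exact h
      rw [Ee_rec m q hm hq1, if_neg (by rw [Nat.even_iff] at hev ⊢; omega),
        Even.neg_one_pow hev, if_pos hev]
      simp
    · rw [Odd.neg_one_pow (Nat.odd_iff.2 (by rw [Nat.even_iff] at hev; omega)), if_neg hev]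
      rcases Nat.eq_zero_or_pos q with h | h
      · subst h; simp [Ee_zero]
      · rw [Ee_rec m q hm h, if_pos (by rw [Nat.even_iff] at hev ⊢; omega)]
        ring

lemma key (m : ℕ) (hm : 2 ≤ m) (hme : Even m) (n : ℕ) :
    (pm m n).eval (-1) = (-1) ^ (n % m) * Ee m (n / m) := by
  induction n using Nat.strong_induction_on with
  | _ n ih =>
    match n with
    | 0 => simp [pm, Ee_zero]
    | n + 1 =>
      have hrec : (pm m (n + 1)).eval (-1) = -(pm m n).eval (-1) +
          (if 2 ≤ m ∧ m ∣ (n + 1) then (pm m ((n + 1) / m)).eval (-1) else 0) := by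
        rw [pm]; split <;> simp
      rw [hrec, ih n (by omega)]
      by_cases hd : m ∣ (n + 1)
      · rw [if_pos ⟨hm, hd⟩, ih ((n + 1) / m) (Nat.div_lt_self (by omega) (by omega))]
        obtain ⟨s, hs⟩ := hd
        obtain ⟨s', rfl⟩ : ∃ s', s = s' + 1 := by
          rcases s with _ | s'
          · simp at hs
          · exact ⟨s', rfl⟩
        have hn' : n = m * s' + (m - 1) := by
          have hms : m * (s' + 1) = m * s' + m := by ring
          omega
        have e1 : (n + 1) % m = 0 := by rw [hs]; exact Nat.mul_mod_right m _
        have e2 : (n + 1) / m = s' + 1 := by rw [hs]; exact Nat.mul_div_cancel_left _ (by omega)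
        have e3 : n % m = m - 1 := by
          rw [hn', add_comm, Nat.add_mul_mod_self_left, Nat.mod_eq_of_lt (by omega)]
        have e4 : n / m = s' := by
          rw [hn', add_comm, Nat.add_mul_div_left _ _ (by omega : 0 < m),
            Nat.div_eq_of_lt (by omega), Nat.zero_add]
        have hodd : Odd (m - 1) := by
          rw [Nat.odd_iff]; have := Nat.even_iff.mp hme; omega
        rw [e1, e2, e3, e4, Odd.neg_one_pow hodd, ← Ee_step m s' hm hme]
        ring
      · rw [if_neg (fun h => hd h.2)]
        have e2 : (n + 1) / m = n / m := Nat.succ_div_of_not_dvd hd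
        have e1 : (n + 1) % m = n % m + 1 := by
          have d1 := Nat.div_add_mod n m
          have d2 := Nat.div_add_mod (n + 1) m
          rw [e2] at d2
          omega
        rw [e1, e2, pow_succ]
        ring

lemma Ee_sum (m : ℕ) (hm : 2 ≤ m) (k : ℕ) (b : ℕ → ℕ) (hb : ∀ j < k, b j < m) :
    Ee m (∑ j ∈ Finset.range k, b j * m ^ j) =
      ∏ j ∈ Finset.range k, (if Even (b j) then (1 : ℤ) else 0) := by
  induction k generalizing b with
  | zero => simp [Ee_zero]
  | succ k ih =>
    have hsplit : ∑ j ∈ Finset.range (k + 1), b j * m ^ j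
        = b 0 + m * ∑ j ∈ Finset.range k, b (j + 1) * m ^ j := by
      rw [Finset.sum_range_succ', Finset.mul_sum]
      simp only [pow_succ, pow_zero, mul_one]
      rw [add_comm]
      congr 1
      apply Finset.sum_congr rfl
      intro j _
      ring
    rw [hsplit, Ee_digit m (b 0) _ hm (hb 0 (by omega)),
      ih (fun j => b (j + 1)) (fun j hj => hb (j + 1) (by omega)),
      Finset.prod_range_succ', mul_comm]

lemma factor_eq (b : ℕ) : (1 + (-1 : ℤ) ^ b) / 2 = if Even b then 1 else 0 := by
  rcases Nat.even_or_odd b with h | h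
  · rw [Even.neg_one_pow h, if_pos h]; norm_num
  · rw [Odd.neg_one_pow h, if_neg (Nat.not_even_iff_odd.mpr h)]; norm_num

/-- For even m and n with base-m digits a_0,…,a_k, a formula for p_m(n,-1). -/
theorem pm_eval_neg_one_even (m k n : ℕ) (hm : 2 ≤ m) (hme : Even m)
    (a : ℕ → ℕ) (ha : ∀ j ≤ k, a j < m)
    (hn : n = ∑ j ∈ Finset.range (k + 1), a j * m ^ j) :
    (pm m n).eval (-1) = (-1) ^ (a 0) * ∏ j ∈ Finset.Icc 1 k, ((1 + (-1 : ℤ) ^ (a j)) / 2) ∧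
    (pm m n).eval (-1) ∈ ({-1, 0, 1} : Set ℤ) ∧
    ((pm m n).eval (-1) = 0 ↔ ∃ j, 1 ≤ j ∧ j ≤ k ∧ Odd (a j)) := by
  set M := ∑ j ∈ Finset.range k, a (j + 1) * m ^ j with hM
  have hsplit : n = a 0 + m * M := by
    rw [hn, Finset.sum_range_succ', Finset.mul_sum]
    simp only [pow_succ, pow_zero, mul_one]
    rw [add_comm]
    congr 1
    apply Finset.sum_congr rfl
    intro j _
    ring
  have ha0 : a 0 < m := ha 0 (by omega)
  have e1 : n % m = a 0 := by
    rw [hsplit, Nat.add_mul_mod_self_left, Nat.mod_eq_of_lt ha0]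
  have e2 : n / m = M := by
    rw [hsplit, Nat.add_mul_div_left _ _ (by omega : 0 < m), Nat.div_eq_of_lt ha0, Nat.zero_add]
  have hEe : Ee m M = ∏ j ∈ Finset.range k, (if Even (a (j + 1)) then (1 : ℤ) else 0) :=
    Ee_sum m hm k (fun j => a (j + 1)) (fun j hj => ha (j + 1) (by omega))
  have hval : (pm m n).eval (-1)
      = (-1) ^ (a 0) * ∏ j ∈ Finset.range k, (if Even (a (j + 1)) then (1 : ℤ) else 0) := by
    rw [key m hm hme n, e1, e2, hEe]
  have hprod : ∏ j ∈ Finset.Icc 1 k, ((1 + (-1 : ℤ) ^ (a j)) / 2)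
      = ∏ j ∈ Finset.range k, (if Even (a (j + 1)) then (1 : ℤ) else 0) := by
    rw [← Finset.Ico_add_one_right_eq_Icc, Finset.prod_Ico_eq_prod_range]
    apply Finset.prod_congr rfl
    intro j _
    rw [factor_eq, add_comm 1 j]
  have hboole : ∏ j ∈ Finset.range k, (if Even (a (j + 1)) then (1 : ℤ) else 0)
      = if ∀ j ∈ Finset.range k, Even (a (j + 1)) then 1 else 0 := Finset.prod_boole
  refine ⟨by rw [hval, hprod], ?_, ?_⟩
  · rw [hval, hboole]
    by_cases hall : ∀ j ∈ Finset.range k, Even (a (j + 1))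
    · rw [if_pos hall, mul_one]
      rcases Nat.even_or_odd (a 0) with h | h
      · right; right; exact Even.neg_one_pow h
      · left; exact Odd.neg_one_pow h
    · rw [if_neg hall, mul_zero]; right; left; rfl
  · rw [hval, hboole]
    constructor
    · intro h
      by_cases hall : ∀ j ∈ Finset.range k, Even (a (j + 1))
      · rw [if_pos hall, mul_one] at h
        rcases Nat.even_or_odd (a 0) with h0 | h0
        · rw [Even.neg_one_pow h0] at h; norm_num at h
        · rw [Odd.neg_one_pow h0] at h; norm_num at h
      · push_neg at hall
        obtain ⟨j, hj, hje⟩ := hall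
        exact ⟨j + 1, by omega, by simpa using hj, Nat.odd_iff.mpr
          (by rw [Nat.even_iff] at hje; omega)⟩
    · rintro ⟨j, hj1, hjk, hjo⟩
      have hnall : ¬ ∀ j ∈ Finset.range k, Even (a (j + 1)) := by
        intro hall
        have := hall (j - 1) (by simp; omega)
        rw [show j - 1 + 1 = j by omega] at this
        exact (Nat.not_even_iff_odd.mpr hjo) this
      rw [if_neg hnall, mul_zero]
end

section
/- Let m ≥ 2 be even. Define e_m(n) as the number of partitions of n into powers of m with an even number of parts and o_m(n) as the number with an odd number of parts. Then |e_m(n) - o_m(n)| ≤ 1 for all n. -/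
open Multiset Finset

namespace MAryAux
open scoped Classical

/-- all base-m digits of s are even -/
def AllEven (m s : ℕ) : Prop := ∀ i, s / m ^ i % m % 2 = 0

lemma allEven_zero (m : ℕ) : AllEven m 0 := by
  intro i; simp [Nat.zero_div]

lemma allEven_iff (m s : ℕ) : AllEven m s ↔ s % m % 2 = 0 ∧ AllEven m (s / m) := by
  constructor
  · intro h
    refine ⟨by simpa using h 0, fun i => ?_⟩
    have := h (i + 1)
    rwa [pow_succ', ← Nat.div_div_eq_div_mul] at this
  · rintro ⟨h0, h⟩ i
    cases i with
    | zero => simpa using h0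
    | succ i =>
      have := h i
      rwa [pow_succ', ← Nat.div_div_eq_div_mul]

/-- the conjectured closed form for e - o -/
noncomputable def f (m n : ℕ) : ℤ :=
  if AllEven m (n / m) then (-1) ^ (n % m) else 0

lemma abs_f_le_one (m n : ℕ) : |f m n| ≤ 1 := by
  unfold f; split
  · rw [abs_pow, abs_neg, abs_one, one_pow]
  · simp

lemma succ_dm (m s : ℕ) (hm : 2 ≤ m) :
    ((s+1) % m = 0 ∧ s % m = m - 1 ∧ (s+1)/m = s/m + 1) ∨
    ((s+1) % m = s % m + 1 ∧ (s+1)/m = s/m) := by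
  have h1 := Nat.div_add_mod s m
  have h2 := Nat.div_add_mod (s+1) m
  have h3 : s % m < m := Nat.mod_lt _ (by omega)
  have hsd := Nat.succ_div (a := s) (b := m)
  by_cases hd : m ∣ (s + 1)
  · left
    have hr0 : (s+1) % m = 0 := Nat.mod_eq_zero_of_dvd hd
    have hqs : (s+1)/m = s/m + 1 := by rw [Nat.succ_div, if_pos hd]
    rw [hqs, hr0, Nat.mul_succ] at h2
    exact ⟨hr0, by omega, hqs⟩
  · right
    have hq : (s+1)/m = s/m := by rw [Nat.succ_div, if_neg hd, add_zero]
    rw [hq] at h2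
    exact ⟨by omega, hq⟩

lemma sum_f (m : ℕ) (hm : 2 ≤ m) (hme : Even m) (s : ℕ) :
    ∑ t ∈ Finset.range (s + 1), f m t = if AllEven m s then 1 else 0 := by
  induction s with
  | zero =>
    rw [Finset.sum_range_one]
    simp [f, Nat.zero_div, Nat.zero_mod, allEven_zero m]
  | succ s ih =>
    rw [Finset.sum_range_succ, ih]
    rcases succ_dm m s hm with ⟨hr0, hsm, hqs⟩ | ⟨hr, hq⟩
    · have h1 : ¬ AllEven m s := by
        intro h
        have h' := ((allEven_iff m s).1 h).1
        rw [hsm] at h'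
        obtain ⟨k, hk⟩ := hme
        omega
      rw [if_neg h1, zero_add]
      unfold f
      rw [hr0, pow_zero, hqs]
      have hiff : AllEven m (s+1) ↔ AllEven m (s/m + 1) := by
        rw [allEven_iff m (s+1), hqs]
        exact ⟨fun h => h.2, fun h => ⟨by rw [hr0], h⟩⟩
      by_cases hA : AllEven m (s/m + 1)
      · rw [if_pos hA, if_pos (hiff.2 hA)]
      · rw [if_neg hA, if_neg (fun h => hA (hiff.1 h))]
    · unfold f
      rw [hq]
      by_cases hAq : AllEven m (s/m)
      · rw [if_pos hAq]
        have hA_s : AllEven m s ↔ s % m % 2 = 0 := by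
          rw [allEven_iff]; exact ⟨fun h => h.1, fun h => ⟨h, hAq⟩⟩
        have hA_s1 : AllEven m (s+1) ↔ (s+1) % m % 2 = 0 := by
          rw [allEven_iff, hq]; exact ⟨fun h => h.1, fun h => ⟨h, hAq⟩⟩
        by_cases he : s % m % 2 = 0
        · rw [if_pos (hA_s.2 he), if_neg (by rw [hA_s1, hr]; omega),
            Odd.neg_one_pow (Nat.odd_iff.2 (by rw [hr]; omega))]
          ring
        · rw [if_neg (by rw [hA_s]; exact he),
            if_pos (hA_s1.2 (by rw [hr]; omega)),
            Even.neg_one_pow (Nat.even_iff.2 (by rw [hr]; omega))]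
          ring
      · rw [if_neg hAq, add_zero,
          if_neg (fun h => hAq ((allEven_iff m s).1 h).2),
          if_neg (fun h => hAq (hq ▸ ((allEven_iff m (s+1)).1 h).2))]

/-- the m-ary predicate -/
def Mary (m : ℕ) {n : ℕ} (P : n.Partition) : Prop := ∀ p ∈ P.parts, ∃ i, p = m ^ i

/-- signed count of m-ary partitions -/
noncomputable def sgn (m n : ℕ) : ℤ :=
  ∑ P ∈ Finset.univ.filter (fun P : n.Partition => Mary m P),
    (-1) ^ (Multiset.card P.parts)

lemma parts_zero (P : Nat.Partition 0) : P.parts = 0 := by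
  apply Multiset.eq_zero_of_forall_notMem
  intro p hp
  have h1 := P.parts_pos hp
  have h2 := Multiset.single_le_sum (fun x _ => Nat.zero_le x) p hp
  rw [P.parts_sum] at h2
  omega

lemma sgn_zero (m : ℕ) : sgn m 0 = 1 := by
  classical
  unfold sgn
  rw [Finset.sum_filter]
  rw [Finset.univ_unique, Finset.sum_singleton]
  rw [if_pos]
  · rw [parts_zero _]; simp
  · intro p hp; rw [parts_zero _] at hp; simp at hp

lemma sum_map_div (m : ℕ) (hm : 0 < m) (s : Multiset ℕ) (h : ∀ p ∈ s, m ∣ p) :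
    m * (s.map (· / m)).sum = s.sum := by
  induction s using Multiset.induction_on with
  | empty => simp
  | cons a s ih =>
    rw [Multiset.map_cons, Multiset.sum_cons, Multiset.sum_cons, Nat.mul_add,
      ih (fun p hp => h p (Multiset.mem_cons_of_mem hp)),
      Nat.mul_div_cancel' (h a (Multiset.mem_cons_self a s))]

section Comb

variable {m n : ℕ}

lemma filter_split (P : n.Partition) :
    P.parts.filter (· = 1) + P.parts.filter (· ≠ 1) = P.parts := by
  simpa using Multiset.filter_add_not (· = 1) P.parts

lemma sum_filter_eq_one (P : n.Partition) :
    (P.parts.filter (· = 1)).sum = P.parts.count 1 := by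
  rw [Multiset.filter_eq', Multiset.sum_replicate, smul_eq_mul, mul_one]

lemma mary_dvd (hP : Mary m P) {p : ℕ} (hp : p ∈ P.parts.filter (· ≠ 1)) : m ∣ p := by
  rw [Multiset.mem_filter] at hp
  obtain ⟨i, rfl⟩ := hP p hp.1
  cases i with
  | zero => simp at hp
  | succ i => exact dvd_pow_self m (Nat.succ_ne_zero i)

lemma quot_sum (hm : 2 ≤ m) (P : n.Partition) (hP : Mary m P) :
    m * ((P.parts.filter (· ≠ 1)).map (· / m)).sum + P.parts.count 1 = n := by
  rw [sum_map_div m (by omega) _ (fun p hp => mary_dvd hP hp)]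
  conv_rhs => rw [← P.parts_sum, ← filter_split P]
  rw [Multiset.sum_add, sum_filter_eq_one]
  ring

/-- cast a partition along an equality of the number being partitioned -/
def castP {a b : ℕ} (h : a = b) (P : Nat.Partition a) : Nat.Partition b := h ▸ P

lemma castP_parts {a b : ℕ} (h : a = b) (P : Nat.Partition a) :
    (castP h P).parts = P.parts := by cases h; rfl

/-- the quotient partition: drop the 1's, divide the rest by m -/
def quotP (hm : 2 ≤ m) (P : n.Partition) (hP : Mary m P) :
    Nat.Partition (((P.parts.filter (· ≠ 1)).map (· / m)).sum) where
  parts := (P.parts.filter (· ≠ 1)).map (· / m)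
  parts_pos := by
    intro q hq
    rw [Multiset.mem_map] at hq
    obtain ⟨p, hp, rfl⟩ := hq
    have hd := mary_dvd hP hp
    rw [Multiset.mem_filter] at hp
    have := P.parts_pos hp.1
    have h1 := hp.2
    rcases hd with ⟨c, rfl⟩
    rw [Nat.mul_div_cancel_left c (by omega)]
    rcases Nat.eq_zero_or_pos c with rfl | hc
    · omega
    · exact hc
  parts_sum := rfl

/-- the inverse: multiply parts by m and pad with 1's -/
def combP (m : ℕ) {t n : ℕ} (hm : 2 ≤ m) (ht : m * t ≤ n) (Q : Nat.Partition t) :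
    Nat.Partition n where
  parts := Q.parts.map (· * m) + Multiset.replicate (n - m * t) 1
  parts_pos := by
    intro p hp
    rw [Multiset.mem_add] at hp
    rcases hp with hp | hp
    · rw [Multiset.mem_map] at hp
      obtain ⟨q, hq, rfl⟩ := hp
      exact Nat.mul_pos (Q.parts_pos hq) (by omega)
    · rw [Multiset.eq_of_mem_replicate hp]; omega
  parts_sum := by
    have hmap : ∀ s : Multiset ℕ, (s.map (· * m)).sum = s.sum * m := by
      intro s
      induction s using Multiset.induction_on with
      | empty => simp
      | cons a s ih => simp [ih, add_mul]
    rw [Multiset.sum_add, hmap, Q.parts_sum, Multiset.sum_replicate, smul_eq_mul, mul_one,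
      mul_comm t m]
    omega

lemma combP_parts (hm : 2 ≤ m) (ht : m * t ≤ n) (Q : Nat.Partition t) :
    (combP m hm ht Q).parts = Q.parts.map (· * m) + Multiset.replicate (n - m * t) 1 := rfl

lemma quotP_parts (hm : 2 ≤ m) (P : n.Partition) (hP : Mary m P) :
    (quotP hm P hP).parts = (P.parts.filter (· ≠ 1)).map (· / m) := rfl

lemma combP_mary (hm : 2 ≤ m) (ht : m * t ≤ n) (Q : Nat.Partition t) (hQ : Mary m Q) :
    Mary m (combP m hm ht Q) := by
  intro p hp
  rw [combP_parts, Multiset.mem_add] at hp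
  rcases hp with hp | hp
  · rw [Multiset.mem_map] at hp
    obtain ⟨q, hq, rfl⟩ := hp
    obtain ⟨i, rfl⟩ := hQ q hq
    exact ⟨i + 1, by rw [pow_succ]⟩
  · exact ⟨0, by rw [Multiset.eq_of_mem_replicate hp, pow_zero]⟩

lemma combP_filter (hm : 2 ≤ m) (ht : m * t ≤ n) (Q : Nat.Partition t) :
    (combP m hm ht Q).parts.filter (· ≠ 1) = Q.parts.map (· * m) := by
  rw [combP_parts, Multiset.filter_add]
  have h1 : (Q.parts.map (· * m)).filter (· ≠ 1) = Q.parts.map (· * m) := by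
    rw [Multiset.filter_eq_self]
    intro p hp
    rw [Multiset.mem_map] at hp
    obtain ⟨q, hq, rfl⟩ := hp
    have := Q.parts_pos hq
    have : q * m ≥ 2 := by nlinarith
    omega
  have h2 : (Multiset.replicate (n - m * t) 1).filter (fun p => p ≠ 1) = 0 := by
    rw [Multiset.filter_eq_nil]
    intro a ha
    rw [Multiset.eq_of_mem_replicate ha]
    simp
  rw [h1, h2, add_zero]

lemma up_down (Q : Nat.Partition t) (hm : 2 ≤ m) :
    (Q.parts.map (· * m)).map (· / m) = Q.parts := by
  rw [Multiset.map_map]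
  rw [show ((· / m) ∘ (· * m)) = fun q : ℕ => q * m / m by
    funext q; simp [Nat.mul_div_cancel q (show 0 < m by omega)]]
  rw [show (fun q : ℕ => q * m / m) = id by
    funext q; simp [Nat.mul_div_cancel q (show 0 < m by omega)]]
  rw [Multiset.map_id]

lemma down_up (P : n.Partition) (hP : Mary m P) :
    ((P.parts.filter (· ≠ 1)).map (· / m)).map (· * m) = P.parts.filter (· ≠ 1) := by
  rw [Multiset.map_map]
  conv_rhs => rw [← Multiset.map_id (P.parts.filter (· ≠ 1))]
  apply Multiset.map_congr rfl
  intro p hp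
  exact Nat.div_mul_cancel (mary_dvd hP hp)

lemma neg_one_pow_congr {a b : ℕ} (h : a % 2 = b % 2) : ((-1 : ℤ)) ^ a = (-1) ^ b := by
  rcases Nat.even_or_odd a with ha | ha
  · rw [Even.neg_one_pow ha, Even.neg_one_pow (Nat.even_iff.2 (by
      rw [← h]; exact Nat.even_iff.1 ha))]
  · rw [Odd.neg_one_pow ha, Odd.neg_one_pow (Nat.odd_iff.2 (by
      rw [← h]; exact Nat.odd_iff.1 ha))]

lemma fiber_sum (hm : 2 ≤ m) (hme : Even m) (n t : ℕ) (ht : m * t ≤ n) :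
    ∑ P ∈ (Finset.univ.filter (fun P : n.Partition => Mary m P)).filter
        (fun P => ((P.parts.filter (· ≠ 1)).map (· / m)).sum = t),
      ((-1 : ℤ)) ^ (Multiset.card P.parts)
    = (-1) ^ n * sgn m t := by
  rw [sgn, Finset.mul_sum]
  refine Finset.sum_bij'
    (fun P hP => castP (Finset.mem_filter.1 hP).2
      (quotP hm P (Finset.mem_filter.1 (Finset.mem_filter.1 hP).1).2))
    (fun Q _ => combP m hm ht Q) ?_ ?_ ?_ ?_ ?_
  · -- maps into target
    intro P hP
    rw [Finset.mem_filter]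
    refine ⟨Finset.mem_univ _, ?_⟩
    intro q hq
    rw [castP_parts, quotP_parts, Multiset.mem_map] at hq
    obtain ⟨p, hp, rfl⟩ := hq
    have hP' := (Finset.mem_filter.1 (Finset.mem_filter.1 hP).1).2
    rw [Multiset.mem_filter] at hp
    obtain ⟨i, rfl⟩ := hP' p hp.1
    cases i with
    | zero => simp at hp
    | succ i => exact ⟨i, by rw [pow_succ, Nat.mul_div_cancel _ (by omega)]⟩
  · -- maps back into source
    intro Q hQ
    rw [Finset.mem_filter, Finset.mem_filter]
    refine ⟨⟨Finset.mem_univ _, combP_mary hm ht Q (Finset.mem_filter.1 hQ).2⟩, ?_⟩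
    rw [combP_filter hm ht Q, up_down Q hm, Q.parts_sum]
  · -- left inverse
    intro P hP
    have hPm := (Finset.mem_filter.1 (Finset.mem_filter.1 hP).1).2
    have hgt := (Finset.mem_filter.1 hP).2
    apply Nat.Partition.ext
    rw [combP_parts, castP_parts, quotP_parts]
    rw [down_up P hPm]
    have hqs := quot_sum hm P hPm
    rw [hgt] at hqs
    have hcount : n - m * t = P.parts.count 1 := by omega
    rw [hcount]
    conv_rhs => rw [← filter_split P]
    rw [Multiset.filter_eq', add_comm]
  · -- right inverse
    intro Q hQ
    apply Nat.Partition.ext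
    rw [castP_parts, quotP_parts]
    rw [combP_filter hm ht Q, up_down Q hm]
  · -- weights
    intro P hP
    have hPm := (Finset.mem_filter.1 (Finset.mem_filter.1 hP).1).2
    have hgt := (Finset.mem_filter.1 hP).2
    rw [castP_parts, quotP_parts, Multiset.card_map]
    have hcardsplit : Multiset.card P.parts
        = P.parts.count 1 + Multiset.card (P.parts.filter (· ≠ 1)) := by
      conv_lhs => rw [← filter_split P]
      rw [Multiset.card_add, Multiset.filter_eq', Multiset.card_replicate]
    rw [hcardsplit, ← pow_add]
    apply neg_one_pow_congr
    have hqs := quot_sum hm P hPm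
    rw [hgt] at hqs
    obtain ⟨w, hw⟩ : Even (m * t) := hme.mul_right t
    omega

lemma sgn_rec (hm : 2 ≤ m) (hme : Even m) (n : ℕ) :
    sgn m n = (-1) ^ n * ∑ t ∈ Finset.range (n / m + 1), sgn m t := by
  rw [Finset.mul_sum, sgn]
  rw [← Finset.sum_fiberwise_of_maps_to
    (g := fun P : n.Partition => ((P.parts.filter (· ≠ 1)).map (· / m)).sum)
    (t := Finset.range (n / m + 1)) ?_ (fun P => ((-1 : ℤ)) ^ (Multiset.card P.parts))]
  · apply Finset.sum_congr rfl
    intro t htm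
    rw [Finset.mem_range] at htm
    exact fiber_sum hm hme n t (by
      have : t ≤ n / m := by omega
      calc m * t ≤ m * (n / m) := Nat.mul_le_mul_left m this
        _ ≤ n := Nat.mul_div_le n m)
  · intro P hP
    have hqs := quot_sum hm P (Finset.mem_filter.1 hP).2
    simp only [Finset.mem_range, Nat.lt_succ_iff]
    rw [Nat.le_div_iff_mul_le (show 0 < m by omega), mul_comm]
    omega

lemma sgn_eq_f (hm : 2 ≤ m) (hme : Even m) (n : ℕ) : sgn m n = f m n := by
  induction n using Nat.strong_induction_on with
  | _ n ih =>
    rcases Nat.eq_zero_or_pos n with rfl | hn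
    · rw [sgn_zero]
      simp [f, Nat.zero_div, Nat.zero_mod, allEven_zero m]
    · rw [sgn_rec hm hme n]
      have hrw : ∀ t ∈ Finset.range (n / m + 1), sgn m t = f m t := by
        intro t htm
        rw [Finset.mem_range] at htm
        exact ih t (by
          have h1 : n / m < n := Nat.div_lt_self hn (by omega)
          omega)
      rw [Finset.sum_congr rfl hrw, sum_f m hm hme (n / m)]
      unfold f
      by_cases hA : AllEven m (n / m)
      · rw [if_pos hA, if_pos hA, mul_one]
        apply neg_one_pow_congr
        have h1 := Nat.div_add_mod n m
        obtain ⟨w, hw⟩ : Even (m * (n / m)) := hme.mul_right _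
        omega
      · rw [if_neg hA, if_neg hA, mul_zero]

end Comb

end MAryAux

/-- Number of m-ary partitions of n (partitions into powers of m) with an even number of parts. -/
noncomputable def evenParts (m n : ℕ) : ℕ :=
  Nat.card {P : n.Partition // (∀ p ∈ P.parts, ∃ i, p = m ^ i) ∧ Even (Multiset.card P.parts)}

/-- Number of m-ary partitions of n with an odd number of parts. -/
noncomputable def oddParts (m n : ℕ) : ℕ :=
  Nat.card {P : n.Partition // (∀ p ∈ P.parts, ∃ i, p = m ^ i) ∧ Odd (Multiset.card P.parts)}

/-- For even m ≥ 2, |e_m(n) - o_m(n)| ≤ 1 for all n. -/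
theorem abs_em_sub_om_le_one (m : ℕ) (hm : 2 ≤ m) (hme : Even m) (n : ℕ) :
    |(evenParts m n : ℤ) - (oddParts m n : ℤ)| ≤ 1 := by
  classical
  have he : (evenParts m n : ℤ) - (oddParts m n : ℤ) = MAryAux.sgn m n := by
    have h1 : evenParts m n = (Finset.univ.filter
        (fun P : n.Partition => MAryAux.Mary m P ∧ Even (Multiset.card P.parts))).card := by
      rw [evenParts, Nat.card_eq_fintype_card, Fintype.card_subtype]
      congr!
    have h2 : oddParts m n = (Finset.univ.filter
        (fun P : n.Partition => MAryAux.Mary m P ∧ Odd (Multiset.card P.parts))).card := by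
      rw [oddParts, Nat.card_eq_fintype_card, Fintype.card_subtype]
      congr!
    have hsplit := Finset.sum_filter_add_sum_filter_not
      (Finset.univ.filter (fun P : n.Partition => MAryAux.Mary m P))
      (fun P => Even (Multiset.card P.parts))
      (fun P => ((-1 : ℤ)) ^ (Multiset.card P.parts))
    have hev : ∑ P ∈ (Finset.univ.filter (fun P : n.Partition => MAryAux.Mary m P)).filter
        (fun P => Even (Multiset.card P.parts)), ((-1 : ℤ)) ^ (Multiset.card P.parts)
        = ((Finset.univ.filter
          (fun P : n.Partition => MAryAux.Mary m P ∧ Even (Multiset.card P.parts))).card : ℤ) := by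
      rw [Finset.filter_filter,
        Finset.sum_congr rfl (fun P hP => Even.neg_one_pow (Finset.mem_filter.1 hP).2.2),
        Finset.sum_const, nsmul_eq_mul, mul_one]
    have hodd : ∑ P ∈ (Finset.univ.filter (fun P : n.Partition => MAryAux.Mary m P)).filter
        (fun P => ¬ Even (Multiset.card P.parts)), ((-1 : ℤ)) ^ (Multiset.card P.parts)
        = -((Finset.univ.filter
          (fun P : n.Partition => MAryAux.Mary m P ∧ Odd (Multiset.card P.parts))).card : ℤ) := by
      rw [Finset.filter_filter,
        Finset.sum_congr rfl (fun P hP => Odd.neg_one_pow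
          (Nat.not_even_iff_odd.1 (Finset.mem_filter.1 hP).2.2)),
        Finset.sum_const, nsmul_eq_mul, mul_neg_one]
      have hfeq : Finset.univ.filter
          (fun P : n.Partition => MAryAux.Mary m P ∧ ¬ Even (Multiset.card P.parts))
          = Finset.univ.filter
          (fun P : n.Partition => MAryAux.Mary m P ∧ Odd (Multiset.card P.parts)) :=
        Finset.filter_congr (fun P _ => by simp [Nat.not_even_iff_odd])
      rw [hfeq]
    rw [h1, h2, MAryAux.sgn, ← hsplit, hev, hodd]
    ring
  rw [he, MAryAux.sgn_eq_f hm hme n]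
  exact MAryAux.abs_f_le_one m n
end

section
/- Let m ≥ 2 be even. The sequence (p_m(n,-1))_{n=0}^∞ is m-automatic, i.e., its m-kernel { (p_m(m^i n + j, -1))_{n=0}^∞ : i ≥ 0, 0 ≤ j < m^i } is a finite set of sequences. -/
def gg (m : ℕ) : ℕ → ℤ
  | 0 => 1
  | n + 1 =>
      if h : 2 ≤ m ∧ (n + 1) % m % 2 = 0 then gg m ((n + 1) / m) else 0
decreasing_by
  exact Nat.div_lt_self (Nat.succ_pos n) (by omega)

lemma gg_eq (m : ℕ) (hm : 2 ≤ m) (q r : ℕ) (hr : r < m) :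
    gg m (m * q + r) = if r % 2 = 0 then gg m q else 0 := by
  rcases Nat.eq_zero_or_pos (m * q + r) with h | h
  · have hq : q = 0 := by
      rcases Nat.eq_zero_or_pos q with h' | h'
      · exact h'
      · nlinarith [Nat.mul_le_mul_left m h']
    have hr0 : r = 0 := by omega
    subst hq; subst hr0
    simp [gg]
  · obtain ⟨k, hk⟩ : ∃ k, m * q + r = k + 1 := ⟨m * q + r - 1, by omega⟩
    have hmod : (k + 1) % m = r := by
      rw [← hk, Nat.mul_add_mod, Nat.mod_eq_of_lt hr]
    have hdiv : (k + 1) / m = q := by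
      rw [← hk, Nat.mul_add_div (by omega), Nat.div_eq_of_lt hr, add_zero]
    rw [hk, gg, hmod, hdiv]
    simp [hm]

lemma gg_mem (m : ℕ) (n : ℕ) : gg m n = 0 ∨ gg m n = 1 := by
  induction n using Nat.strong_induction_on with
  | _ n ih =>
    match n with
    | 0 => right; simp [gg]
    | k + 1 =>
      rw [gg]
      split
      · next h => exact ih _ (Nat.div_lt_self (Nat.succ_pos k) (by omega))
      · left; rfl

lemma gg_pow (m : ℕ) (hm : 2 ≤ m) :
    ∀ i j n, j < m ^ i → gg m (m ^ i * n + j) = gg m j * gg m n := by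
  intro i
  induction i with
  | zero =>
    intro j n hj
    have : j = 0 := by simpa using hj
    subst this
    simp [gg]
  | succ k ih =>
    intro j n hj
    have h1 : m ^ (k+1) * n + j = m * (m ^ k * n + j / m) + j % m := by
      have h2 := Nat.div_add_mod j m
      rw [Nat.mul_add, add_assoc, h2, pow_succ]
      ring
    have hjm : j / m < m ^ k := by
      rw [Nat.div_lt_iff_lt_mul (by omega)]
      calc j < m ^ (k+1) := hj
      _ = m ^ k * m := by rw [pow_succ]
    rw [h1, gg_eq m hm _ _ (Nat.mod_lt _ (by omega)),
        ih (j / m) n hjm]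
    conv_rhs => rw [show j = m * (j / m) + j % m from (Nat.div_add_mod j m).symm,
      gg_eq m hm _ _ (Nat.mod_lt _ (by omega))]
    split <;> simp
lemma gg_rec (m : ℕ) (hm : 2 ≤ m) (hme : Even m) (q : ℕ) (hq : 1 ≤ q) :
    gg m q = gg m (q - 1) + (-1 : ℤ) ^ q * gg m (q / m) := by
  obtain ⟨a, r, hr, rfl⟩ : ∃ a r, r < m ∧ q = m * a + r :=
    ⟨q / m, q % m, Nat.mod_lt _ (by omega), (Nat.div_add_mod q m).symm⟩
  have hdiv : (m * a + r) / m = a := by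
    rw [Nat.mul_add_div (by omega), Nat.div_eq_of_lt hr, add_zero]
  rw [hdiv, gg_eq m hm a r hr]
  rcases Nat.eq_zero_or_pos r with h0 | h0
  · subst h0
    have ha : 1 ≤ a := by nlinarith
    have e2 : m * a + 0 - 1 = m * (a - 1) + (m - 1) := by
      obtain ⟨b, rfl⟩ : ∃ b, a = b + 1 := ⟨a - 1, by omega⟩
      have h5 : m * (b + 1) = m * b + m := by ring
      simp only [Nat.add_sub_cancel]
      omega
    have hm1 : (m - 1) % 2 = 1 := Nat.odd_iff.mp (Nat.Even.sub_odd (by omega) hme odd_one)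
    have heven : Even (m * a + 0) := by simpa using hme.mul_right a
    rw [e2, gg_eq m hm _ _ (by omega), hm1, heven.neg_one_pow]
    simp
  · have e2 : m * a + r - 1 = m * a + (r - 1) := by omega
    rw [e2, gg_eq m hm _ _ (by omega)]
    rcases Nat.even_or_odd r with he | ho
    · have h2 : r % 2 = 0 := Nat.even_iff.mp he
      have h3 : (r - 1) % 2 = 1 :=
        Nat.odd_iff.mp (Nat.Even.sub_odd (by omega) he odd_one)
      have heven : Even (m * a + r) := (hme.mul_right _).add he
      rw [h2, h3, heven.neg_one_pow]
      simp
    · have h2 : r % 2 = 1 := Nat.odd_iff.mp ho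
      have h3 : (r - 1) % 2 = 0 := by omega
      have hodd : Odd (m * a + r) := (hme.mul_right _).add_odd ho
      rw [h2, h3, hodd.neg_one_pow]
      simp

lemma a_val (m : ℕ) (hm : 2 ≤ m) (hme : Even m) :
    ∀ n, (pm m n).eval (-1) = (-1 : ℤ) ^ n * gg m (n / m) := by
  intro n
  induction n using Nat.strong_induction_on with
  | _ n ih =>
    match n with
    | 0 => simp [pm, gg, Nat.zero_div]
    | k + 1 =>
      rw [pm]
      by_cases h : m ∣ (k + 1)
      · obtain ⟨q, hq⟩ := h
        have hq1 : 1 ≤ q := by nlinarith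
        have hqk : q < k + 1 := by nlinarith
        have hd1 : (k + 1) / m = q := by rw [hq, Nat.mul_div_cancel_left _ (by omega)]
        have hd2 : k / m = q - 1 := by
          obtain ⟨b, rfl⟩ : ∃ b, q = b + 1 := ⟨q - 1, by omega⟩
          have hk : k = m * b + (m - 1) := by
            have : m * (b + 1) = m * b + m := by ring
            omega
          rw [hk, Nat.mul_add_div (by omega), Nat.div_eq_of_lt (by omega)]
          simp
        have hcond : 2 ≤ m ∧ m ∣ (k + 1) := ⟨hm, ⟨q, hq⟩⟩
        rw [dif_pos hcond, Polynomial.eval_add, Polynomial.eval_mul,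
          Polynomial.eval_X, ih k (by omega), ih ((k + 1) / m) (by omega),
          hd1, hd2]
        have hke : Odd k := by
          have : Even (k + 1) := hq ▸ hme.mul_right q
          rcases Nat.even_or_odd k with hk | hk
          · exfalso; exact (Nat.even_add_one.mp this) hk
          · exact hk
        have hk1e : Even (k + 1) := hq ▸ hme.mul_right q
        rw [hke.neg_one_pow, hk1e.neg_one_pow, gg_rec m hm hme q hq1]
        ring
      · have hcond : ¬ (2 ≤ m ∧ m ∣ (k + 1)) := by tauto
        rw [dif_neg hcond, Polynomial.eval_add, Polynomial.eval_mul,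
          Polynomial.eval_X, ih k (by omega)]
        have hd : (k + 1) / m = k / m := by
          rw [Nat.succ_div, if_neg h, add_zero]
        rw [hd, Polynomial.eval_zero, pow_succ]
        ring

/-- For even m ≥ 2, the sequence (p_m(n,-1))ₙ is m-automatic: its m-kernel is finite. -/
theorem pm_eval_neg_one_automatic (m : ℕ) (hm : 2 ≤ m) (hme : Even m) :
    Set.Finite { s : ℕ → ℤ | ∃ i j : ℕ, j < m ^ i ∧
      s = fun n => (pm m (m ^ i * n + j)).eval (-1) } := by
  apply Set.Finite.subset
    ((((Set.finite_singleton (fun _ => (0 : ℤ))).insert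
      (fun n => -gg m n)).insert (fun n => gg m n)).insert
        (fun n => (pm m n).eval (-1)))
  rintro s ⟨i, j, hj, rfl⟩
  simp only [Set.mem_insert_iff, Set.mem_singleton_iff]
  match i with
  | 0 =>
    have hj0 : j = 0 := by simpa using hj
    subst hj0
    left
    funext n
    simp
  | k + 1 =>
    have hjm : j % m < m := Nat.mod_lt _ (by omega)
    have hjd : j / m < m ^ k := by
      rw [Nat.div_lt_iff_lt_mul (by omega)]
      calc j < m ^ (k + 1) := hj
        _ = m ^ k * m := by rw [pow_succ]
    have key : ∀ n : ℕ, (pm m (m ^ (k + 1) * n + j)).eval (-1)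
        = (-1 : ℤ) ^ j * (gg m (j / m) * gg m n) := by
      intro n
      rw [a_val m hm hme]
      have hsplit : m ^ (k + 1) * n + j = m * (m ^ k * n + j / m) + j % m := by
        have h2 := Nat.div_add_mod j m
        rw [Nat.mul_add, add_assoc, h2, pow_succ]
        ring
      have hdiv : (m ^ (k + 1) * n + j) / m = m ^ k * n + j / m := by
        rw [hsplit, Nat.mul_add_div (by omega), Nat.div_eq_of_lt hjm, add_zero]
      rw [hdiv, gg_pow m hm k (j / m) n hjd]
      have hsgn : (-1 : ℤ) ^ (m ^ (k + 1) * n + j) = (-1 : ℤ) ^ j := by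
        rw [pow_add]
        have : Even (m ^ (k + 1) * n) := by
          have : Even (m ^ (k + 1)) := by
            rw [pow_succ']
            exact hme.mul_right _
          exact this.mul_right n
        rw [this.neg_one_pow, one_mul]
      rw [hsgn]
    rcases gg_mem m (j / m) with hg | hg
    · right; right; right
      funext n
      rw [key n, hg]
      ring
    · rcases Nat.even_or_odd j with he | ho
      · right; left
        funext n
        rw [key n, hg, he.neg_one_pow]
        ring
      · right; right; left
        funext n
        rw [key n, hg, ho.neg_one_pow]
        ring
end

section
/- Let m ≥ 3 be odd. Then for every n, p_m(n,-1) = (-1)^n p_m(n,1). In particular p_m(n,-1) ≠ 0 for all n and |p_m(n,-1)| → ∞ as n → ∞. -/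
open Polynomial Filter

lemma pm_succ_eq (m n : ℕ) :
    pm m (n + 1) = Polynomial.X * pm m n +
      if h : 2 ≤ m ∧ m ∣ (n + 1) then pm m ((n + 1) / m) else 0 := by
  rw [pm]

lemma pm_eval1_pos (m : ℕ) : ∀ n, 0 < (pm m n).eval 1 := by
  intro n
  induction n using Nat.strong_induction_on with
  | _ n ih =>
    match n with
    | 0 => simp [pm]
    | Nat.succ k =>
      rw [pm_succ_eq]
      split
      · next h =>
        have h1 := ih k (Nat.lt_succ_self k)
        have h2 := ih ((k + 1) / m) (Nat.div_lt_self (Nat.succ_pos k) (by omega))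
        simp only [eval_add, eval_mul, eval_X, one_mul]
        linarith
      · have h1 := ih k (Nat.lt_succ_self k)
        simp only [eval_add, eval_mul, eval_X, one_mul, eval_zero, add_zero]
        linarith

lemma pm_eval1_mono (m : ℕ) : Monotone (fun n => (pm m n).eval 1) := by
  apply monotone_nat_of_le_succ
  intro n
  rw [pm_succ_eq]
  split
  · next h =>
    have h2 := pm_eval1_pos m ((n + 1) / m)
    simp only [eval_add, eval_mul, eval_X, one_mul]
    linarith
  · simp

lemma pm_eval1_mul (m : ℕ) (hm : 2 ≤ m) : ∀ k : ℕ, (k : ℤ) + 1 ≤ (pm m (m * k)).eval 1 := by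
  intro k
  induction k with
  | zero => simpa [pm] using (pm_eval1_pos m 0)
  | succ k ih =>
    have hk : m * (k + 1) = (m * k + m - 1) + 1 := by rw [Nat.mul_succ]; omega
    rw [hk, pm_succ_eq]
    have hdvd : 2 ≤ m ∧ m ∣ (m * k + m - 1 + 1) := ⟨hm, hk ▸ dvd_mul_right m (k + 1)⟩
    rw [dif_pos hdvd]
    have hmono : (pm m (m * k)).eval 1 ≤ (pm m (m * k + m - 1)).eval 1 :=
      pm_eval1_mono m (by omega)
    have hpos := pm_eval1_pos m ((m * k + m - 1 + 1) / m)
    simp only [eval_add, eval_mul, eval_X, one_mul]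
    push_cast
    linarith

lemma pm_eval_neg (m : ℕ) (hm : 2 ≤ m) (hmo : Odd m) :
    ∀ n, (pm m n).eval (-1) = (-1) ^ n * (pm m n).eval 1 := by
  intro n
  induction n using Nat.strong_induction_on with
  | _ n ih =>
    match n with
    | 0 => simp [pm]
    | Nat.succ k =>
      rw [pm_succ_eq]
      split
      · next h =>
        obtain ⟨-, q, hq⟩ := h
        have h1 := ih k (Nat.lt_succ_self k)
        have h2 := ih ((k + 1) / m) (Nat.div_lt_self (Nat.succ_pos k) (by omega))
        have hq' : (k + 1) / m = q := by rw [hq]; exact Nat.mul_div_cancel_left q (by omega)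
        have hpow : ((-1 : ℤ)) ^ ((k + 1) / m) = (-1) ^ (k + 1) := by
          rw [hq', hq, pow_mul, Odd.neg_one_pow hmo]
        simp only [eval_add, eval_mul, eval_X, one_mul]
        rw [h1, h2, hpow, pow_succ]
        ring
      · have h1 := ih k (Nat.lt_succ_self k)
        simp only [eval_add, eval_mul, eval_X, one_mul, eval_zero, add_zero]
        rw [h1, pow_succ]
        ring

/-- For odd m ≥ 3: p_m(n,-1) = (-1)^n p_m(n,1); in particular p_m(n,-1) ≠ 0 and
|p_m(n,-1)| → ∞. -/
theorem pm_eval_neg_one_odd (m : ℕ) (hm : 3 ≤ m) (hmo : Odd m) :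
    (∀ n : ℕ, (pm m n).eval (-1) = (-1) ^ n * (pm m n).eval 1) ∧
    (∀ n : ℕ, (pm m n).eval (-1) ≠ 0) ∧
    Filter.Tendsto (fun n : ℕ => |(pm m n).eval (-1)|) Filter.atTop Filter.atTop := by
  have hm2 : 2 ≤ m := by omega
  have hneg := pm_eval_neg m hm2 hmo
  have habs : ∀ n, |(pm m n).eval (-1)| = (pm m n).eval 1 := by
    intro n
    rw [hneg n, abs_mul, abs_pow, abs_neg, abs_one, one_pow, one_mul,
      abs_of_pos (pm_eval1_pos m n)]
  refine ⟨hneg, fun n => ?_, ?_⟩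
  · rw [hneg n]
    have := pm_eval1_pos m n
    intro hc
    rcases mul_eq_zero.1 hc with h | h
    · exact pow_ne_zero n (by norm_num) h
    · omega
  · rw [tendsto_atTop]
    intro N
    rw [eventually_atTop]
    refine ⟨m * N.toNat, fun n hn => ?_⟩
    rw [habs n]
    have h1 : (pm m (m * N.toNat)).eval 1 ≤ (pm m n).eval 1 := pm_eval1_mono m hn
    have h2 := pm_eval1_mul m hm2 N.toNat
    have h3 : N ≤ (N.toNat : ℤ) := Int.self_le_toNat N
    linarith
end

section
/- Let m ≥ 2 and define the reduced polynomial p̃_m(n,t) := p_m(n,t)/t^{s_m(n)}, where s_m(n) is the base-m digit sum of n. Then p̃_m(n,t) is a polynomial in t^{m-1} with nonnegative integer coefficients. -/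
open Polynomial

lemma digits_sum_succ_not_dvd {m n : ℕ} (hm : 2 ≤ m) (h : ¬ m ∣ (n+1)) :
    (Nat.digits m (n+1)).sum = (Nat.digits m n).sum + 1 := by
  rcases Nat.eq_zero_or_pos n with rfl | hn
  · have e : (0:ℕ) + 1 = 1 := rfl
    rw [e, Nat.digits_def' (by omega : 1 < m) one_pos,
        Nat.div_eq_of_lt (by omega : 1 < m)]
    simp [Nat.mod_eq_of_lt (by omega : 1 < m)]
  · have hdiv : (n+1)/m = n/m := by rw [Nat.succ_div, if_neg h]; ring
    have e1 := Nat.div_add_mod (n+1) m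
    have e2 := Nat.div_add_mod n m
    rw [hdiv] at e1
    have hmod : (n+1) % m = n % m + 1 := by
      generalize m * (n / m) = a at e1 e2; omega
    rw [Nat.digits_def' (by omega : 1 < m) (by omega : 0 < n + 1),
        Nat.digits_def' (by omega : 1 < m) hn, hdiv, hmod]
    simp; ring

lemma digits_sum_mul {m k : ℕ} (hm : 2 ≤ m) (hk : 0 < k) :
    (Nat.digits m (m*k)).sum = (Nat.digits m k).sum := by
  rw [Nat.digits_def' (by omega : 1 < m) (by positivity), Nat.mul_mod_right,
      Nat.mul_div_cancel_left _ (by omega : 0 < m)]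
  simp

lemma digits_sum_pred {m j : ℕ} (hm : 2 ≤ m) (hj : 0 < j) :
    (Nat.digits m (m*j-1)).sum = (Nat.digits m (j-1)).sum + (m-1) := by
  obtain ⟨j', rfl⟩ : ∃ j', j = j' + 1 := ⟨j - 1, by omega⟩
  have he : m * (j' + 1) - 1 = (m - 1) + j' * m := by
    have : 1 ≤ m := by omega
    cases j' <;> ring_nf <;> omega
  rw [he, Nat.digits_def' (by omega : 1 < m) (by omega : 0 < (m-1) + j'*m),
      Nat.add_mul_mod_self_right, Nat.add_mul_div_right _ _ (by omega : 0 < m),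
      Nat.mod_eq_of_lt (by omega : m - 1 < m), Nat.div_eq_of_lt (by omega : m - 1 < m)]
  simp [Nat.add_comm]

lemma digits_sum_le {m : ℕ} (hm : 2 ≤ m) : ∀ k, 0 < k →
    (Nat.digits m k).sum ≤ (Nat.digits m (k-1)).sum + 1 := by
  intro k
  induction k using Nat.strong_induction_on with
  | _ k ih =>
    intro hk
    by_cases h : m ∣ k
    · obtain ⟨j, rfl⟩ := h
      have hj : 0 < j := by
        rcases Nat.eq_zero_or_pos j with rfl | h'
        · simp at hk
        · exact h'
      have hjk : j < m * j := by
        calc j = 1 * j := (one_mul j).symm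
        _ < m * j := (Nat.mul_lt_mul_right hj).mpr (by omega)
      have := ih j hjk hj
      rw [digits_sum_mul hm hj, digits_sum_pred hm hj]
      omega
    · obtain ⟨n, rfl⟩ : ∃ n, k = n+1 := ⟨k-1, by omega⟩
      rw [digits_sum_succ_not_dvd hm h]
      simp

lemma digits_sum_dvd {m : ℕ} (hm : 2 ≤ m) (n : ℕ) :
    ((m:ℤ)-1) ∣ (n : ℤ) - ((Nat.digits m n).sum : ℤ) := by
  by_cases h2 : m = 2
  · subst h2; norm_num
  · have hmod : m % (m-1) = 1 := by
      calc m % (m-1) = (1 + 1*(m-1)) % (m-1) := by congr 1; omega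
        _ = 1 % (m-1) := Nat.add_mul_mod_self_right 1 1 (m-1)
        _ = 1 := Nat.mod_eq_of_lt (by omega)
    have h := (Nat.modEq_digits_sum (m-1) m hmod n).dvd
    rw [show (((m-1:ℕ)):ℤ) = (m:ℤ)-1 by omega] at h
    exact dvd_sub_comm.mp h

lemma key_s11 {m k : ℕ} (hm : 2 ≤ m) (hk : 0 < k) :
    ∃ c : ℕ, (Nat.digits m (m*k-1)).sum + 1 = (Nat.digits m (m*k)).sum + (m-1)*c := by
  have hmk : 0 < m * k := by positivity
  set a := (Nat.digits m (m*k-1)).sum with ha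
  set b := (Nat.digits m (m*k)).sum with hb
  have hle : b ≤ a + 1 := digits_sum_le hm (m*k) hmk
  have hd1 := digits_sum_dvd hm (m*k-1)
  have hd2 := digits_sum_dvd hm (m*k)
  rw [← ha] at hd1
  rw [← hb] at hd2
  have hcast : ((m*k-1 : ℕ) : ℤ) = (m:ℤ)*k - 1 := by push_cast [Nat.cast_sub hmk]; ring
  rw [hcast] at hd1
  have hdvd : ((m:ℤ)-1) ∣ ((a:ℤ) + 1 - b) := by
    have he : ((a:ℤ) + 1 - b) = (((m:ℤ)*k) - b) - (((m:ℤ)*k - 1) - a) := by ring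
    rw [he]
    exact dvd_sub hd2 hd1
  obtain ⟨c, hc⟩ := hdvd
  have hm1 : (1:ℤ) ≤ (m:ℤ) - 1 := by
    have : (2:ℤ) ≤ (m:ℤ) := by exact_mod_cast hm
    linarith
  have hnn : (0:ℤ) ≤ (a:ℤ) + 1 - b := by
    have : (b:ℤ) ≤ (a:ℤ) + 1 := by exact_mod_cast hle
    linarith
  have hc0 : 0 ≤ c := by nlinarith
  refine ⟨c.toNat, ?_⟩
  have : ((a:ℤ) + 1) = (b:ℤ) + ((m:ℤ)-1) * c := by linarith [hc]
  have hfin : ((a:ℤ) + 1) = (b:ℤ) + (((m-1:ℕ)):ℤ) * ((c.toNat : ℕ) : ℤ) := by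
    rw [Int.toNat_of_nonneg hc0, show (((m-1:ℕ)):ℤ) = (m:ℤ)-1 by omega]
    exact this
  exact_mod_cast hfin

/-- p_m(n,t)/t^{s_m(n)} is a polynomial in t^{m-1} with nonnegative integer coefficients. -/
theorem pm_reduced (m : ℕ) (hm : 2 ≤ m) (n : ℕ) :
    ∃ q : Polynomial ℤ, (∀ i, 0 ≤ q.coeff i) ∧
      pm m n = Polynomial.X ^ ((Nat.digits m n).sum) * q.comp (Polynomial.X ^ (m - 1)) := by
  induction n using Nat.strong_induction_on with
  | _ n ih =>
    match n with
    | 0 =>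
      refine ⟨1, ?_, ?_⟩
      · intro i
        rcases eq_or_ne i 0 with rfl | h
        · simp
        · simp [Polynomial.coeff_one, h]
      · simp [pm]
    | n + 1 =>
      rw [pm]
      by_cases hdvd : m ∣ (n+1)
      · -- divisible case
        rw [dif_pos ⟨hm, hdvd⟩]
        set k := (n+1)/m with hkdef
        have hmk : m * k = n + 1 := Nat.mul_div_cancel' hdvd
        have hk0 : 0 < k :=
          Nat.div_pos (Nat.le_of_dvd (Nat.succ_pos n) hdvd) (by omega)
        have hkn : k < n + 1 := by
          rw [hkdef]
          exact Nat.div_lt_self (Nat.succ_pos n) (by omega)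
        obtain ⟨q1, hq1, h1⟩ := ih n (Nat.lt_succ_self n)
        obtain ⟨q2, hq2, h2⟩ := ih k hkn
        obtain ⟨c, hc⟩ := key_s11 hm hk0
        have hn : n = m*k - 1 := by omega
        have e1 : (Nat.digits m n).sum = (Nat.digits m (m*k-1)).sum := by rw [hn]
        have e2 : (Nat.digits m (n+1)).sum = (Nat.digits m (m*k)).sum := by rw [hmk]
        refine ⟨X^c * q1 + q2, ?_, ?_⟩
        · intro i
          rw [coeff_add]
          refine add_nonneg ?_ (hq2 i)
          rw [mul_comm, Polynomial.coeff_mul_X_pow']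
          split
          · exact hq1 _
          · exact le_refl 0
        · have e3 : (Nat.digits m k).sum = (Nat.digits m (m*k)).sum :=
            (digits_sum_mul hm hk0).symm
          have expand : (X^c * q1 + q2).comp ((X:Polynomial ℤ)^(m-1)) =
              X^((m-1)*c) * q1.comp ((X:Polynomial ℤ)^(m-1)) +
                q2.comp ((X:Polynomial ℤ)^(m-1)) := by
            rw [add_comp, mul_comp, X_pow_comp, ← pow_mul]
          rw [h1, h2, e1, e2, e3, expand]
          have hXp : (X:Polynomial ℤ) * X^((Nat.digits m (m*k-1)).sum) =
              X^((Nat.digits m (m*k)).sum) * X^((m-1)*c) := by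
            rw [← pow_succ', ← pow_add, hc]
          calc X * (X^((Nat.digits m (m*k-1)).sum) * q1.comp ((X:Polynomial ℤ)^(m-1)))
                + X^((Nat.digits m (m*k)).sum) * q2.comp ((X:Polynomial ℤ)^(m-1))
              = (X * X^((Nat.digits m (m*k-1)).sum)) * q1.comp ((X:Polynomial ℤ)^(m-1))
                + X^((Nat.digits m (m*k)).sum) * q2.comp ((X:Polynomial ℤ)^(m-1)) := by
                ring
            _ = _ := by rw [hXp]; ring
      · -- not divisible
        rw [dif_neg (by tauto)]
        obtain ⟨q, hq, hpm⟩ := ih n (Nat.lt_succ_self n)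
        refine ⟨q, hq, ?_⟩
        rw [hpm, digits_sum_succ_not_dvd hm hdvd, add_zero, pow_succ]
        ring
end

section
/- Let M = (m_i) with m_0=1, m_i ≥ 2, let M' = (1, m_2, m_3, …), and let f(m,t) := (t^m - 1)/(t - 1). Write n = k m_2 + r with r ∈ {0,…,m_2 - 1}. Then p_M(m_1 n, t) ≡ t^r f(r+1, t^{m_1 - 1}) · p_{M'}(k m_2, t) modulo the polynomial t^{m_1 + m_2 - 1} f(m_2, t^{m_1 - 1}). -/
def shiftSeq (m : ℕ → ℕ) : ℕ → ℕ := fun i => if i = 0 then 1 else m (i + 1)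

noncomputable def pM : (ℕ → ℕ) → ℕ → Polynomial ℤ
  | _, 0 => 1
  | m, n + 1 =>
      Polynomial.X * pM m n +
        if h : 2 ≤ m 1 ∧ m 1 ∣ (n + 1) then pM (shiftSeq m) ((n + 1) / m 1) else 0
termination_by m n => n
decreasing_by
  · exact Nat.lt_succ_self n
  · exact Nat.div_lt_self (Nat.succ_pos n) (by omega)

/-- f(a, t^e) = 1 + t^e + t^(2e) + ⋯ + t^((a-1)e), i.e. f(a,s) = (s^a-1)/(s-1) at s = t^e. -/
noncomputable def fpow (a e : ℕ) : Polynomial ℤ :=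
  ∑ i ∈ Finset.range a, Polynomial.X ^ (e * i)

lemma pM_zero (m : ℕ → ℕ) : pM m 0 = 1 := by rw [pM]

lemma pM_succ (m : ℕ → ℕ) (n : ℕ) : pM m (n+1) = Polynomial.X * pM m n +
    if 2 ≤ m 1 ∧ m 1 ∣ (n + 1) then pM (shiftSeq m) ((n + 1) / m 1) else 0 := by
  rw [pM]; split <;> simp_all

lemma pM_off (m : ℕ → ℕ) (h : 2 ≤ m 1) (a : ℕ) :
    ∀ s, s < m 1 → pM m (m 1 * a + s) = Polynomial.X ^ s * pM m (m 1 * a) := by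
  intro s
  induction s with
  | zero => intro _; simp
  | succ s ih =>
    intro hs
    have hnd : ¬ (m 1 ∣ m 1 * a + s + 1) := by
      intro hd
      have h3 : m 1 * a + s + 1 = m 1 * a + (s + 1) := by omega
      rw [h3] at hd
      have h2 : m 1 ∣ s + 1 := (Nat.dvd_add_right ⟨a, rfl⟩).mp hd
      have := Nat.le_of_dvd (Nat.succ_pos s) h2
      omega
    have heq : m 1 * a + (s + 1) = (m 1 * a + s) + 1 := by omega
    rw [heq, pM_succ, if_neg (by tauto), add_zero, ih (by omega)]
    ring

lemma pM_step (m : ℕ → ℕ) (h : 2 ≤ m 1) (a : ℕ) :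
    pM m (m 1 * (a+1)) = Polynomial.X ^ (m 1) * pM m (m 1 * a) + pM (shiftSeq m) (a+1) := by
  have hms : m 1 * (a+1) = m 1 * a + m 1 := by ring
  have e : m 1 * (a+1) = (m 1 * a + (m 1 - 1)) + 1 := by omega
  have hd : m 1 ∣ (m 1 * a + (m 1 - 1)) + 1 := ⟨a + 1, by omega⟩
  have hq : ((m 1 * a + (m 1 - 1)) + 1) / m 1 = a + 1 := by
    rw [show (m 1 * a + (m 1 - 1)) + 1 = m 1 * (a+1) from e.symm]
    exact Nat.mul_div_cancel_left _ (by omega)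
  rw [e, pM_succ, if_pos ⟨h, hd⟩, hq, pM_off m h a (m 1 - 1) (by omega)]
  rw [← mul_assoc, ← pow_succ']
  rw [show m 1 - 1 + 1 = m 1 by omega]

lemma pM_sum (m : ℕ → ℕ) (h : 2 ≤ m 1) (n : ℕ) :
    pM m (m 1 * n) = ∑ j ∈ Finset.range (n+1),
      Polynomial.X ^ (m 1 * (n - j)) * pM (shiftSeq m) j := by
  induction n with
  | zero => simp [pM_zero]
  | succ n ih =>
    rw [pM_step m h n, ih, Finset.mul_sum]
    conv_rhs => rw [Finset.sum_range_succ]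
    congr 1
    · apply Finset.sum_congr rfl
      intro j hj
      rw [Finset.mem_range] at hj
      obtain ⟨d, rfl⟩ : ∃ d, n = j + d := ⟨n - j, by omega⟩
      rw [← mul_assoc, ← pow_add]
      rw [show j + d - j = d by omega, show j + d + 1 - j = d + 1 by omega]
      rw [show m 1 + m 1 * d = m 1 * (d + 1) by ring]
    · simp

lemma fpow_succ' (w e : ℕ) : fpow (w+1) e = 1 + Polynomial.X ^ e * fpow w e := by
  unfold fpow
  rw [Finset.sum_range_succ', Finset.mul_sum]
  simp only [pow_zero, mul_zero]
  rw [add_comm]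
  congr 1
  apply Finset.sum_congr rfl
  intro i _
  rw [← pow_add]
  congr 1
  ring

lemma sum_geo (m1 : ℕ) (hm1 : 1 ≤ m1) (b w : ℕ) :
    ∑ s ∈ Finset.range w, (Polynomial.X : Polynomial ℤ) ^ (m1 * (b + (w - 1 - s)) + s)
      = Polynomial.X ^ (m1 * b + (w - 1)) * fpow w (m1 - 1) := by
  induction w generalizing b with
  | zero => simp [fpow]
  | succ w ih =>
    rcases Nat.eq_zero_or_pos w with hw | hw
    · subst hw
      simp [fpow]
    rw [Finset.sum_range_succ]
    have e1 : ∀ s ∈ Finset.range w,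
        (Polynomial.X : Polynomial ℤ) ^ (m1 * (b + (w + 1 - 1 - s)) + s)
          = Polynomial.X ^ (m1 * ((b+1) + (w - 1 - s)) + s) := by
      intro s hs
      rw [Finset.mem_range] at hs
      rw [show b + (w + 1 - 1 - s) = (b+1) + (w - 1 - s) by omega]
    have e2 : m1 * (b + (w + 1 - 1 - w)) + w = m1 * b + w := by
      rw [show b + (w + 1 - 1 - w) = b by omega]
    rw [Finset.sum_congr rfl e1, ih (b+1), e2, fpow_succ']
    have hmb : m1 * (b + 1) = m1 * b + m1 := by ring
    have e4 : m1 * (b+1) + (w-1) = (m1 * b + w) + (m1 - 1) := by omega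
    have e5 : m1 * b + (w+1-1) = m1 * b + w := by omega
    rw [e4, e5, pow_add]
    ring

/-- For n = k m₂ + r with 0 ≤ r < m₂,
p_M(m₁ n, t) ≡ t^r f(r+1, t^{m₁-1}) p_{M'}(k m₂, t) mod t^{m₁+m₂-1} f(m₂, t^{m₁-1}). -/
theorem pM_congruence (m : ℕ → ℕ) (h0 : m 0 = 1) (hm : ∀ i ≥ 1, 2 ≤ m i)
    (n k r : ℕ) (hr : r < m 2) (hn : n = k * m 2 + r) :
    (Polynomial.X ^ (m 1 + m 2 - 1) * fpow (m 2) (m 1 - 1)) ∣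
      (pM m (m 1 * n) -
        Polynomial.X ^ r * fpow (r + 1) (m 1 - 1) * pM (shiftSeq m) (k * m 2)) := by
  have hm1 : 2 ≤ m 1 := hm 1 le_rfl
  have hm2 : 2 ≤ m 2 := hm 2 (by norm_num)
  have hs1 : shiftSeq m 1 = m 2 := by simp [shiftSeq]
  set p' := pM (shiftSeq m) with hp'
  have hoff : ∀ a s, s < m 2 → p' (m 2 * a + s) = Polynomial.X ^ s * p' (m 2 * a) := by
    intro a s hs
    have := pM_off (shiftSeq m) (by rwa [hs1]) a s (by rwa [hs1])
    rwa [hs1] at this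
  have hsum : pM m (m 1 * n) = ∑ j ∈ Finset.range (n+1),
      Polynomial.X ^ (m 1 * (n - j)) * p' j := pM_sum m hm1 n
  have hsplit : (n + 1) = k * m 2 + (r + 1) := by omega
  rw [hsum, hsplit, Finset.sum_range_add]
  have htail : ∑ s ∈ Finset.range (r+1),
      Polynomial.X ^ (m 1 * (n - (k * m 2 + s))) * p' (k * m 2 + s)
        = Polynomial.X ^ r * fpow (r+1) (m 1 - 1) * p' (k * m 2) := by
    have e1 : ∀ s ∈ Finset.range (r+1),
        Polynomial.X ^ (m 1 * (n - (k * m 2 + s))) * p' (k * m 2 + s)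
          = Polynomial.X ^ (m 1 * (0 + (r + 1 - 1 - s)) + s) * p' (m 2 * k) := by
      intro s hs
      rw [Finset.mem_range] at hs
      have harg : n - (k * m 2 + s) = 0 + (r + 1 - 1 - s) := by omega
      rw [harg, show k * m 2 + s = m 2 * k + s by ring, hoff k s (by omega),
        ← mul_assoc, ← pow_add]
    rw [Finset.sum_congr rfl e1, ← Finset.sum_mul, sum_geo (m 1) (by omega) 0 (r+1)]
    rw [mul_zero, zero_add, show r + 1 - 1 = r from rfl, show m 2 * k = k * m 2 by ring]
  rw [htail]
  have hgoal : ∀ D A B : Polynomial ℤ, D ∣ A → D ∣ (A + B - B) := by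
    intro D A B hA; simpa using hA
  have hD : ∀ a, a ≤ k → (Polynomial.X ^ (m 1 + m 2 - 1) * fpow (m 2) (m 1 - 1)) ∣
      ∑ j ∈ Finset.range (a * m 2), Polynomial.X ^ (m 1 * (n - j)) * p' j := by
    intro a
    induction a with
    | zero => intro _; simp
    | succ a ih =>
      intro ha
      have ih' := ih (by omega)
      rw [show (a+1) * m 2 = a * m 2 + m 2 by ring, Finset.sum_range_add]
      refine dvd_add ih' ?_
      have hA : a * m 2 + m 2 ≤ n := by
        have h1 : (a+1) * m 2 ≤ k * m 2 := Nat.mul_le_mul_right _ ha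
        have h2 : (a+1) * m 2 = a * m 2 + m 2 := by ring
        omega
      set b := n - a * m 2 - m 2 + 1 with hb
      have hb1 : 1 ≤ b := by omega
      have e1 : ∀ s ∈ Finset.range (m 2),
          Polynomial.X ^ (m 1 * (n - (a * m 2 + s))) * p' (a * m 2 + s)
            = Polynomial.X ^ (m 1 * (b + (m 2 - 1 - s)) + s) * p' (m 2 * a) := by
        intro s hs
        rw [Finset.mem_range] at hs
        have harg : n - (a * m 2 + s) = b + (m 2 - 1 - s) := by omega
        rw [harg, show a * m 2 + s = m 2 * a + s by ring, hoff a s hs,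
          ← mul_assoc, ← pow_add]
      rw [Finset.sum_congr rfl e1, ← Finset.sum_mul, sum_geo (m 1) (by omega) b (m 2)]
      refine ⟨Polynomial.X ^ (m 1 * (b - 1)) * p' (m 2 * a), ?_⟩
      have h1 : m 1 * (b - 1) + m 1 = m 1 * b := by
        calc m 1 * (b - 1) + m 1 = m 1 * ((b-1) + 1) := by ring
        _ = m 1 * b := by rw [show b - 1 + 1 = b by omega]
      have h2 : (m 1 + m 2 - 1) + m 1 * (b - 1) = m 1 * b + (m 2 - 1) := by omega
      calc Polynomial.X ^ (m 1 * b + (m 2 - 1)) * fpow (m 2) (m 1 - 1) * p' (m 2 * a)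
          = Polynomial.X ^ ((m 1 + m 2 - 1) + m 1 * (b - 1)) * fpow (m 2) (m 1 - 1)
              * p' (m 2 * a) := by rw [h2]
        _ = Polynomial.X ^ (m 1 + m 2 - 1) * fpow (m 2) (m 1 - 1) *
              (Polynomial.X ^ (m 1 * (b - 1)) * p' (m 2 * a)) := by rw [pow_add]; ring
  exact hgoal _ _ _ (hD k le_rfl)
end

section
/- Let M = (m_i) with m_0=1, m_i ≥ 2, and let n = a_0 + a_1 M_1 + ⋯ + a_k M_k be the M-ary representation of n. Then b_M(n) ≡ ∏_{j=1}^{k} (a_j + 1) (mod gcd(m_1, …, m_k)), where b_M(n) is the number of M-ary partitions of n. -/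
/-- The number of M-ary partitions of n, i.e. partitions of n into parts of the form
Mᵢ = m₀m₁⋯mᵢ. -/
noncomputable def bM (m : ℕ → ℕ) (n : ℕ) : ℕ :=
  Nat.card {P : n.Partition // ∀ p ∈ P.parts, ∃ i, p = ∏ j ∈ Finset.range (i + 1), m j}

def Mp (m : ℕ → ℕ) (i : ℕ) : ℕ := ∏ j ∈ Finset.range (i + 1), m j

def shf (m : ℕ → ℕ) (i : ℕ) : ℕ := if i = 0 then 1 else m (i + 1)

lemma shf_zero (m : ℕ → ℕ) : shf m 0 = 1 := rfl

lemma shf_ge (m : ℕ → ℕ) (hm : ∀ i ≥ 1, 2 ≤ m i) : ∀ i ≥ 1, 2 ≤ shf m i := by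
  intro i hi
  simp only [shf, if_neg (by omega : ¬ i = 0)]
  exact hm (i + 1) (by omega)

lemma Mp_zero (m : ℕ → ℕ) (h0 : m 0 = 1) : Mp m 0 = 1 := by
  simp [Mp, h0]

lemma Mp_pos (m : ℕ → ℕ) (h0 : m 0 = 1) (hm : ∀ i ≥ 1, 2 ≤ m i) (i : ℕ) : 0 < Mp m i := by
  refine Finset.prod_pos fun j _ => ?_
  rcases Nat.eq_zero_or_pos j with h | h
  · simp [h, h0]
  · have := hm j h; omega

lemma Mp_succ (m : ℕ → ℕ) (h0 : m 0 = 1) (i : ℕ) : Mp m (i + 1) = m 1 * Mp (shf m) i := by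
  rw [show Mp m (i + 1) = ∏ j ∈ Finset.range (i + 2), m j from rfl,
    Finset.prod_range_succ' m (i + 1), h0, mul_one,
    Finset.prod_range_succ' (fun j => m (j + 1)) i,
    show Mp (shf m) i = ∏ j ∈ Finset.range (i + 1), shf m j from rfl,
    Finset.prod_range_succ' (shf m) i, shf_zero, mul_one, mul_comm]
  have h : ∀ k : ℕ, shf m (k + 1) = m (k + 1 + 1) := fun k => by simp [shf]
  simp [h]

def pEquiv (pred : ℕ → Prop) (t : ℕ) :
    {P : t.Partition // ∀ p ∈ P.parts, pred p} ≃
      {s : Multiset ℕ // s.sum = t ∧ (∀ p ∈ s, 0 < p) ∧ ∀ p ∈ s, pred p} where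
  toFun P := ⟨P.1.parts, P.1.parts_sum, fun _ hp => P.1.parts_pos hp, P.2⟩
  invFun s := ⟨⟨s.1, fun {_} hi => s.2.2.1 _ hi, s.2.1⟩, s.2.2.2⟩
  left_inv := fun ⟨⟨_, _, _⟩, _⟩ => rfl
  right_inv := fun ⟨_, _, _, _⟩ => rfl

lemma bM_zero (m : ℕ → ℕ) : bM m 0 = 1 := by
  rw [bM, Nat.card_eq_one_iff_unique]
  constructor
  · constructor
    intro ⟨P1, h1⟩ ⟨P2, h2⟩
    have hp : ∀ P : Nat.Partition 0, P.parts = 0 := by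
      intro P
      rw [Multiset.eq_zero_iff_forall_notMem]
      intro p hp
      have h1 := P.parts_pos hp
      have h2 : p ≤ Multiset.sum P.parts := Multiset.single_le_sum (fun _ _ => Nat.zero_le _) _ hp
      rw [P.parts_sum] at h2
      omega
    exact Subtype.ext (Nat.Partition.ext ((hp P1).trans (hp P2).symm))
  · exact ⟨⟨⟨0, by simp, by simp⟩, by simp⟩⟩

lemma card_sigma_fin {N : ℕ} (G : ℕ → Type) [∀ t, Finite (G t)] :
    Nat.card (Σ t : Fin N, G t) = ∑ t ∈ Finset.range N, Nat.card (G t) := by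
  letI : ∀ t : ℕ, Fintype (G t) := fun t => Fintype.ofFinite _
  rw [Nat.card_eq_fintype_card, Fintype.card_sigma]
  rw [← Fin.sum_univ_eq_sum_range (fun t => Nat.card (G t)) N]
  exact Finset.sum_congr rfl fun t _ => by simp [Nat.card_eq_fintype_card]

lemma bM_rec (m : ℕ → ℕ) (h0 : m 0 = 1) (hm : ∀ i ≥ 1, 2 ≤ m i) (n : ℕ) :
    bM m n = ∑ t ∈ Finset.range (n / m 1 + 1), bM (shf m) t := by
  classical
  have hb : 2 ≤ m 1 := hm 1 le_rfl
  have hb0 : 0 < m 1 := by omega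
  set b := m 1 with hbdef
  set G : ℕ → Type := fun t =>
    {s : Multiset ℕ // s.sum = t ∧ (∀ p ∈ s, 0 < p) ∧ ∀ p ∈ s, ∃ i, p = Mp (shf m) i} with hG
  have hGfin : ∀ t, Finite (G t) := fun t =>
    Finite.of_equiv _ (pEquiv (fun p => ∃ i, p = Mp (shf m) i) t)
  -- the set of parts > 1
  set S : n.Partition → Multiset ℕ := fun P => P.parts.filter (fun p => ¬ p = 1) with hS
  have key : ∀ P : n.Partition, (∀ p ∈ P.parts, ∃ i, p = Mp m i) →
      ∀ q ∈ S P, ∃ i, q = b * Mp (shf m) i := by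
    intro P hP q hq
    rw [hS, Multiset.mem_filter] at hq
    obtain ⟨i, rfl⟩ := hP q hq.1
    match i with
    | 0 => exact absurd (Mp_zero m h0) hq.2
    | (i + 1) => exact ⟨i, Mp_succ m h0 i⟩
  have hsplit : ∀ P : n.Partition,
      (P.parts.filter (fun p => p = 1)).sum + (S P).sum = n := by
    intro P
    rw [hS, ← Multiset.sum_add, Multiset.filter_add_not, P.parts_sum]
  have hones : ∀ P : n.Partition,
      P.parts.filter (fun p => p = 1) = Multiset.replicate (n - (S P).sum) 1 := by
    intro P
    rw [Multiset.filter_eq']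
    congr 1
    have h1 := hsplit P
    have h2 : (P.parts.filter (fun p => p = 1)).sum = Multiset.count 1 P.parts := by
      rw [Multiset.filter_eq', Multiset.sum_replicate, smul_eq_mul, mul_one]
    omega
  have hSsum : ∀ P : n.Partition, (∀ p ∈ P.parts, ∃ i, p = Mp m i) →
      b * ((S P).map (fun q => q / b)).sum = (S P).sum := by
    intro P hP
    rw [← Multiset.sum_map_mul_left]
    have : ((S P).map fun i => b * (i / b)) = (S P).map id := by
      refine Multiset.map_congr rfl fun q hq => ?_
      obtain ⟨i, rfl⟩ := key P hP q hq
      rw [Nat.mul_div_cancel_left _ hb0]; rfl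
    rw [this, Multiset.map_id]
  have hSle : ∀ P : n.Partition, (S P).sum ≤ n := fun P => le_trans (Nat.le_add_left _ _) (hsplit P).le
  let fwd : {P : n.Partition // ∀ p ∈ P.parts, ∃ i, p = Mp m i} → Σ t : Fin (n / b + 1), G t :=
    fun P =>
      ⟨⟨((S P.1).map (fun q => q / b)).sum, by
          rw [Nat.lt_succ_iff, Nat.le_div_iff_mul_le hb0, mul_comm]
          exact le_trans (hSsum P.1 P.2).le (hSle P.1)⟩,
        ⟨(S P.1).map (fun q => q / b), rfl, by
          intro p hp
          obtain ⟨q, hq, rfl⟩ := Multiset.mem_map.1 hp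
          obtain ⟨i, rfl⟩ := key P.1 P.2 q hq
          rw [Nat.mul_div_cancel_left _ hb0]
          exact Mp_pos (shf m) (shf_zero m) (shf_ge m hm) i, by
          intro p hp
          obtain ⟨q, hq, rfl⟩ := Multiset.mem_map.1 hp
          obtain ⟨i, rfl⟩ := key P.1 P.2 q hq
          rw [Nat.mul_div_cancel_left _ hb0]
          exact ⟨i, rfl⟩⟩⟩
  have hbij : Function.Bijective fwd := by
    constructor
    · intro P₁ P₂ h
      have h2 : ((S P₁.1).map (fun q => q / b)) = ((S P₂.1).map (fun q => q / b)) :=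
        congrArg (fun x : Σ t : Fin (n / b + 1), G t => (x.2 : Multiset ℕ)) h
      have e1 : ∀ P : {P : n.Partition // ∀ p ∈ P.parts, ∃ i, p = Mp m i},
          ((S P.1).map (fun q => q / b)).map (fun q => q * b) = S P.1 := by
        intro P
        rw [Multiset.map_map]
        have : ((S P.1).map fun q => (q / b) * b) = (S P.1).map id := by
          refine Multiset.map_congr rfl fun q hq => ?_
          obtain ⟨i, rfl⟩ := key P.1 P.2 q hq
          rw [Nat.mul_div_cancel_left _ hb0, mul_comm]; rfl
        exact this.trans (Multiset.map_id _)
      have hs : S P₁.1 = S P₂.1 := by rw [← e1 P₁, ← e1 P₂, h2]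
      have hparts : P₁.1.parts = P₂.1.parts := by
        rw [← Multiset.filter_add_not (fun p => p = 1) P₁.1.parts,
          ← Multiset.filter_add_not (fun p => p = 1) P₂.1.parts]
        rw [hones P₁.1, hones P₂.1, hs]
        exact congrArg (Multiset.replicate (n - (S P₂.1).sum) 1 + ·) hs
      exact Subtype.ext (Nat.Partition.ext hparts)
    · rintro ⟨⟨t, ht⟩, s, hsum, hpos, hpred⟩
      have hsum' : s.sum = t := hsum
      have hbt : t * b ≤ n := (Nat.le_div_iff_mul_le hb0).1 (Nat.lt_succ_iff.1 ht)
      refine ⟨⟨⟨s.map (fun q => q * b) + Multiset.replicate (n - t * b) 1, ?_, ?_⟩, ?_⟩, ?_⟩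
      · intro p hp
        rcases Multiset.mem_add.1 hp with hp | hp
        · obtain ⟨q, hq, rfl⟩ := Multiset.mem_map.1 hp
          exact Nat.mul_pos (hpos q hq) hb0
        · rw [Multiset.eq_of_mem_replicate hp]; omega
      · rw [Multiset.sum_add, Multiset.sum_replicate, smul_eq_mul, mul_one]
        have : (s.map fun q => q * b).sum = s.sum * b := by
          rw [show (s.map fun q => q * b) = (s.map fun q => id q * b) from rfl,
            Multiset.sum_map_mul_right, Multiset.map_id]
        rw [this, hsum']
        omega
      · intro p hp
        rcases Multiset.mem_add.1 hp with hp | hp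
        · obtain ⟨q, hq, rfl⟩ := Multiset.mem_map.1 hp
          obtain ⟨i, rfl⟩ := hpred q hq
          exact ⟨i + 1, by rw [Mp_succ m h0 i, mul_comm]⟩
        · rw [Multiset.eq_of_mem_replicate hp]
          exact ⟨0, (Mp_zero m h0).symm⟩
      · -- fwd of this partition equals the given pair
        set P : n.Partition := ⟨s.map (fun q => q * b) + Multiset.replicate (n - t * b) 1, by
            intro p hp
            rcases Multiset.mem_add.1 hp with hp | hp
            · obtain ⟨q, hq, rfl⟩ := Multiset.mem_map.1 hp
              exact Nat.mul_pos (hpos q hq) hb0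
            · rw [Multiset.eq_of_mem_replicate hp]; omega, by
            rw [Multiset.sum_add, Multiset.sum_replicate, smul_eq_mul, mul_one]
            have : (s.map fun q => q * b).sum = s.sum * b := by
              rw [show (s.map fun q => q * b) = (s.map fun q => id q * b) from rfl,
                Multiset.sum_map_mul_right, Multiset.map_id]
            rw [this, hsum']
            omega⟩ with hP
        have hSP : S P = s.map (fun q => q * b) := by
          rw [hS]
          show (s.map (fun q => q * b) + Multiset.replicate (n - t * b) 1).filter _ = _
          rw [Multiset.filter_add]
          have e1 : (s.map (fun q => q * b)).filter (fun p => ¬ p = 1) = s.map (fun q => q * b) := by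
            rw [Multiset.filter_eq_self]
            intro p hp
            obtain ⟨q, hq, rfl⟩ := Multiset.mem_map.1 hp
            have := hpos q hq
            have : 2 ≤ q * b := by nlinarith
            omega
          have e2 : (Multiset.replicate (n - t * b) 1).filter (fun p : ℕ => ¬ p = 1) = 0 := by
            rw [Multiset.filter_eq_nil]
            intro p hp
            rw [Multiset.eq_of_mem_replicate hp]
            simp
          rw [e1, e2, add_zero]
        have hback : (S P).map (fun q => q / b) = s := by
          rw [hSP, Multiset.map_map]
          have : (s.map fun q => (q * b) / b) = s.map id := by
            refine Multiset.map_congr rfl fun q _ => ?_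
            simp [Nat.mul_div_cancel _ hb0]
          exact this.trans (Multiset.map_id _)
        refine Sigma.subtype_ext ?_ ?_
        · apply Fin.ext
          show ((S P).map (fun q => q / b)).sum = t
          rw [hback, hsum']
        · show (S P).map (fun q => q / b) = s
          exact hback
  have hcard : bM m n = Nat.card (Σ t : Fin (n / b + 1), G t) := by
    rw [bM]
    exact Nat.card_congr (Equiv.ofBijective fwd hbij)
  rw [hcard, card_sigma_fin G]
  refine Finset.sum_congr rfl fun t _ => ?_
  rw [hG, bM]
  exact (Nat.card_congr (pEquiv (fun p => ∃ i, p = Mp (shf m) i) t)).symm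

lemma sum_div_aux (f : ℕ → ℕ) (b : ℕ) (hb : 0 < b) :
    ∀ (q : ℕ) (s : ℕ), s ≤ b → ∑ t ∈ Finset.range (b * q + s), f (t / b) =
      b * ∑ u ∈ Finset.range q, f u + s * f q := by
  intro q
  induction q with
  | zero =>
    intro s hs
    rw [Finset.sum_congr rfl (fun t ht => by
      rw [Nat.div_eq_of_lt (lt_of_lt_of_le (Finset.mem_range.1 (by simpa using ht)) hs)])]
    simp [mul_comm]
  | succ q IH =>
    intro s hs
    have key : b * (q + 1) + s = (b * q + b) + s := by ring
    rw [key, Finset.range_eq_Ico,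
      ← Finset.sum_Ico_consecutive (fun t => f (t / b)) (Nat.zero_le (b * q + b))
        (Nat.le_add_right _ s), ← Finset.range_eq_Ico, IH b le_rfl]
    have h2 : ∑ t ∈ Finset.Ico (b * q + b) (b * q + b + s), f (t / b) = s * f (q + 1) := by
      rw [Finset.sum_congr rfl (fun t ht => by
        have h := Finset.mem_Ico.1 ht
        rw [Nat.div_eq_of_lt_le (k := q + 1) (n := b) (by
            have e1 : (q + 1) * b = b * q + b := by ring
            omega) (by
            have e2 : (q + 1 + 1) * b = b * q + b + b := by ring
            omega)])]
      rw [Finset.sum_const, Nat.card_Ico, smul_eq_mul]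
      congr 1
      omega
    rw [h2, Finset.sum_range_succ]
    ring

lemma claimC : ∀ (k : ℕ) (m : ℕ → ℕ), m 0 = 1 → (∀ i ≥ 1, 2 ≤ m i) →
    ∀ a : ℕ → ℕ, (∀ j ≤ k, a j < m (j + 1)) →
    (∑ t ∈ Finset.range ((∑ j ∈ Finset.range (k + 1), a j * Mp m j) + 1), bM m t) ≡
      (∏ j ∈ Finset.range (k + 1), (a j + 1)) [MOD (Finset.Icc 1 k).gcd m] := by
  intro k
  induction k with
  | zero =>
    intro m h0 hm a ha
    have hb : 2 ≤ m 1 := hm 1 le_rfl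
    have ha0 : a 0 < m 1 := ha 0 le_rfl
    have hN : (∑ j ∈ Finset.range 1, a j * Mp m j) = a 0 := by simp [Mp_zero m h0]
    rw [hN]
    have hsum : ∑ t ∈ Finset.range (a 0 + 1), bM m t = a 0 + 1 := by
      rw [Finset.sum_congr rfl fun t _ => bM_rec m h0 hm t]
      rw [Finset.sum_congr rfl fun t ht => by
        rw [Nat.div_eq_of_lt
          (lt_of_lt_of_le (Finset.mem_range.1 ht) (by omega : a 0 + 1 ≤ m 1))]]
      simp [bM_zero]
    rw [hsum, Finset.prod_range_one]
  | succ k IH =>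
    intro m h0 hm a ha
    have hb : 2 ≤ m 1 := hm 1 le_rfl
    set F : ℕ → ℕ := fun x => ∑ s ∈ Finset.range (x + 1), bM (shf m) s with hF
    set N' : ℕ := ∑ j ∈ Finset.range (k + 1), a (j + 1) * Mp (shf m) j with hN'
    have hsplitN : (∑ j ∈ Finset.range (k + 2), a j * Mp m j) + 1 = m 1 * N' + (a 0 + 1) := by
      rw [Finset.sum_range_succ' (fun j => a j * Mp m j) (k + 1), Mp_zero m h0, mul_one,
        hN', Finset.mul_sum]
      rw [Finset.sum_congr rfl fun j _ => (by rw [Mp_succ m h0 j]; ring :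
        a (j + 1) * Mp m (j + 1) = m 1 * (a (j + 1) * Mp (shf m) j))]
      ring
    rw [hsplitN]
    rw [Finset.sum_congr rfl fun t _ => bM_rec m h0 hm t]
    have hdiv := sum_div_aux F (m 1) (by omega) N' (a 0 + 1)
      (by have h : a 0 < m 1 := ha 0 (by omega); omega)
    rw [show (∑ t ∈ Finset.range (m 1 * N' + (a 0 + 1)),
        ∑ s ∈ Finset.range (t / m 1 + 1), bM (shf m) s) =
        ∑ t ∈ Finset.range (m 1 * N' + (a 0 + 1)), F (t / m 1) from rfl, hdiv]
    have hIH := IH (shf m) (shf_zero m) (shf_ge m hm) (fun j => a (j + 1)) (fun j hj => by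
      have h1 : a (j + 1) < m (j + 2) := ha (j + 1) (by omega)
      have h2 : shf m (j + 1) = m (j + 2) := by simp [shf]
      show a (j + 1) < shf m (j + 1)
      omega)
    have hFN : F N' = ∑ t ∈ Finset.range (N' + 1), bM (shf m) t := rfl
    have hdvd1 : (Finset.Icc 1 (k + 1)).gcd m ∣ m 1 :=
      Finset.gcd_dvd (Finset.mem_Icc.2 ⟨le_rfl, by omega⟩)
    have hdvd2 : (Finset.Icc 1 (k + 1)).gcd m ∣ (Finset.Icc 1 k).gcd (shf m) := by
      refine Finset.dvd_gcd fun j hj => ?_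
      have hj' := Finset.mem_Icc.1 hj
      have hsh : shf m j = m (j + 1) := by
        simp only [shf, if_neg (by omega : ¬ j = 0)]
      rw [hsh]
      exact Finset.gcd_dvd (Finset.mem_Icc.2 ⟨by omega, by omega⟩)
    have h1 : m 1 * (∑ u ∈ Finset.range N', F u) ≡ 0 [MOD (Finset.Icc 1 (k + 1)).gcd m] :=
      Nat.modEq_zero_iff_dvd.2 (Dvd.dvd.mul_right hdvd1 _)
    have h2 : (a 0 + 1) * F N' ≡
        (a 0 + 1) * ∏ j ∈ Finset.range (k + 1), (a (j + 1) + 1)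
          [MOD (Finset.Icc 1 (k + 1)).gcd m] := by
      rw [hFN]
      exact (Nat.ModEq.of_dvd hdvd2 hIH).mul_left (a 0 + 1)
    have h3 := h1.add h2
    rw [zero_add] at h3
    have hprod : ∏ j ∈ Finset.range (k + 2), (a j + 1) =
        (a 0 + 1) * ∏ j ∈ Finset.range (k + 1), (a (j + 1) + 1) := by
      rw [Finset.prod_range_succ' (fun j => a j + 1) (k + 1), mul_comm]
    rw [hprod]
    exact h3

/-- If n = a₀ + a₁M₁ + ⋯ + a_kM_k is the M-ary representation of n, then
b_M(n) ≡ ∏ (aⱼ+1) mod gcd(m₁,…,m_k). -/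
theorem bM_mod (m : ℕ → ℕ) (h0 : m 0 = 1) (hm : ∀ i ≥ 1, 2 ≤ m i)
    (n k : ℕ) (a : ℕ → ℕ) (ha : ∀ j ≤ k, a j < m (j + 1))
    (hn : n = ∑ j ∈ Finset.range (k + 1), a j * ∏ i ∈ Finset.range (j + 1), m i) :
    bM m n ≡ ∏ j ∈ Finset.Icc 1 k, (a j + 1) [MOD (Finset.Icc 1 k).gcd m] := by
  have hb : 2 ≤ m 1 := hm 1 le_rfl
  have hn' : n = ∑ j ∈ Finset.range (k + 1), a j * Mp m j := hn
  match k, ha, hn' with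
  | 0, ha, hn' =>
    have ha0 : a 0 < m 1 := ha 0 le_rfl
    have hna : n = a 0 := by rw [hn']; simp [Mp_zero m h0]
    have hbm : bM m n = 1 := by
      rw [bM_rec m h0 hm n, hna, Nat.div_eq_of_lt (by omega)]
      simp [bM_zero]
    have hicc : Finset.Icc 1 0 = (∅ : Finset ℕ) := by
      exact Finset.Icc_eq_empty (by omega)
    rw [hbm, hicc]
    simp [Nat.ModEq]
  | (k + 1), ha, hn' =>
    set N' : ℕ := ∑ j ∈ Finset.range (k + 1), a (j + 1) * Mp (shf m) j with hN'
    have ha0 : a 0 < m 1 := ha 0 (by omega)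
    have hn2 : n = m 1 * N' + a 0 := by
      rw [hn', Finset.sum_range_succ' (fun j => a j * Mp m j) (k + 1), Mp_zero m h0, mul_one,
        hN', Finset.mul_sum]
      rw [Finset.sum_congr rfl fun j _ => (by rw [Mp_succ m h0 j]; try ring :
        a (j + 1) * Mp m (j + 1) = m 1 * (a (j + 1) * Mp (shf m) j))]
      try ring
    have hdivn : n / m 1 = N' := by
      rw [hn2, Nat.mul_add_div (by omega), Nat.div_eq_of_lt ha0, add_zero]
    have hC := claimC k (shf m) (shf_zero m) (shf_ge m hm) (fun j => a (j + 1)) (fun j hj => by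
      have h1 : a (j + 1) < m (j + 2) := ha (j + 1) (by omega)
      have h2 : shf m (j + 1) = m (j + 2) := by simp [shf]
      show a (j + 1) < shf m (j + 1)
      omega)
    have hdvd2 : (Finset.Icc 1 (k + 1)).gcd m ∣ (Finset.Icc 1 k).gcd (shf m) := by
      refine Finset.dvd_gcd fun j hj => ?_
      have hj' := Finset.mem_Icc.1 hj
      have hsh : shf m j = m (j + 1) := by
        simp only [shf, if_neg (by omega : ¬ j = 0)]
      rw [hsh]
      exact Finset.gcd_dvd (Finset.mem_Icc.2 ⟨by omega, by omega⟩)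
    have hmain : bM m n ≡ ∏ j ∈ Finset.range (k + 1), (a (j + 1) + 1)
        [MOD (Finset.Icc 1 (k + 1)).gcd m] := by
      rw [bM_rec m h0 hm n, hdivn]
      exact Nat.ModEq.of_dvd hdvd2 hC
    have hprod : ∏ j ∈ Finset.Icc 1 (k + 1), (a j + 1) =
        ∏ j ∈ Finset.range (k + 1), (a (j + 1) + 1) := by
      rw [← Finset.Ico_add_one_right_eq_Icc, Finset.prod_Ico_eq_prod_range]
      refine Finset.prod_congr (by norm_num) fun i _ => by rw [Nat.add_comm 1 i]
    rw [hprod]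
    exact hmain
end

section
/- Let m ≥ 2, let j, r ≥ 1, and let n be a positive integer with m ∤ n. If the number a_m(j, m^r n - 1) of partitions of m^r n - 1 into exactly j powers of m is at least 1, then j ≥ (m-1)r. -/
lemma sum_map_div_aux (m : ℕ) (t : Multiset ℕ) (h : ∀ p ∈ t, m ∣ p) :
    t.sum = m * (t.map (· / m)).sum := by
  induction t using Multiset.induction_on with
  | empty => simp
  | cons a t ih =>
    simp only [Multiset.map_cons, Multiset.sum_cons]
    rw [ih (fun p hp => h p (Multiset.mem_cons_of_mem hp)), Nat.mul_add,
      Nat.mul_div_cancel' (h a (Multiset.mem_cons_self a t))]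

lemma key_lemma (m : ℕ) (hm : 2 ≤ m) : ∀ r, ∀ s : Multiset ℕ,
    (∀ p ∈ s, ∃ i, p = m ^ i) → ∀ M, s.sum + 1 = m ^ r * M →
    (m - 1) * r ≤ Multiset.card s := by
  intro r
  induction r with
  | zero => intro s _ M _; simp
  | succ r ih =>
    intro s hpow M hsum
    have hm' : 0 < m := by omega
    set c := s.count 1 with hc
    set t := s.filter (· ≠ 1) with ht
    have hsplit : Multiset.replicate c 1 + t = s := by
      rw [hc, ht, ← Multiset.filter_eq' s 1]
      exact Multiset.filter_add_not _ s
    have hsum_split : s.sum = c + t.sum := by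
      conv_lhs => rw [← hsplit]
      simp [Multiset.sum_replicate]
    have hcard_split : Multiset.card s = c + Multiset.card t := by
      conv_lhs => rw [← hsplit]
      simp
    -- every element of t is divisible by m
    have hdvd_t : ∀ p ∈ t, m ∣ p := by
      intro p hp
      rw [ht, Multiset.mem_filter] at hp
      obtain ⟨i, rfl⟩ := hpow p hp.1
      cases i with
      | zero => exact absurd (by simp) hp.2
      | succ i => exact ⟨m ^ i, by rw [pow_succ, mul_comm]⟩
    obtain ⟨k, hk⟩ : m ∣ t.sum := Multiset.dvd_sum hdvd_t
    set A := m ^ r * M with hA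
    have hmA : m ^ (r + 1) * M = m * A := by rw [hA, pow_succ]; ring
    have h1 : c + 1 + m * k = m * A := by
      rw [← hmA, ← hsum, hsum_split, hk]; ring
    have hkA : k ≤ A := by
      by_contra hlt
      push_neg at hlt
      have : m * A < m * k := (Nat.mul_lt_mul_left hm').mpr hlt
      omega
    have h2 : m * A = m * k + m * (A - k) := by
      rw [← Nat.mul_add, Nat.add_sub_cancel' hkA]
    have h3 : c + 1 = m * (A - k) := by omega
    -- A - k ≥ 1
    have hd1 : 1 ≤ A - k := by
      by_contra hd
      push_neg at hd
      interval_cases h : (A - k) <;> omega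
    set q := A - k - 1 with hq
    have hdq : A - k = q + 1 := by omega
    have hmq : m * (A - k) = m * q + m := by rw [hdq]; ring
    have hcq : c + 1 = m * q + m := by omega
    -- the divided multiset
    set u := t.map (· / m) with hu
    have htu : t.sum = m * u.sum := sum_map_div_aux m t hdvd_t
    -- s'
    set s' := Multiset.replicate q 1 + u with hs'
    have hsum' : s'.sum + 1 = m ^ r * M := by
      have hmu : m * k = m * u.sum := by rw [← hk, htu]
      have hku : k = u.sum := Nat.eq_of_mul_eq_mul_left hm' hmu
      have : q + 1 + u.sum = A := by
        have hmm : m * (q + 1 + u.sum) = m * A := by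
          rw [Nat.mul_add, Nat.mul_add, ← hku]
          omega
        exact Nat.eq_of_mul_eq_mul_left hm' hmm
      rw [hs']
      simp [Multiset.sum_replicate, hA.symm]
      omega
    have hpow' : ∀ p ∈ s', ∃ i, p = m ^ i := by
      intro p hp
      rw [hs', Multiset.mem_add] at hp
      rcases hp with hp | hp
      · exact ⟨0, by simpa using (Multiset.eq_of_mem_replicate hp)⟩
      · rw [hu, Multiset.mem_map] at hp
        obtain ⟨x, hx, rfl⟩ := hp
        rw [ht, Multiset.mem_filter] at hx
        obtain ⟨i, rfl⟩ := hpow x hx.1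
        cases i with
        | zero => exact absurd (by simp) hx.2
        | succ i =>
          exact ⟨i, by rw [pow_succ, Nat.mul_div_cancel _ hm']⟩
    have hih := ih s' hpow' M hsum'
    have hcard' : Multiset.card s' = q + Multiset.card t := by
      rw [hs']; simp [hu]
    have hqmq : q ≤ m * q := Nat.le_mul_of_pos_left _ hm'
    have hexp : (m - 1) * (r + 1) = (m - 1) * r + (m - 1) := by ring
    set K := (m - 1) * r with hK
    set Q := m * q with hQ
    omega

/-- The number of representations of N as a sum of exactly j powers of m. -/
noncomputable def am (m j N : ℕ) : ℕ :=
  Nat.card {P : N.Partition // (∀ p ∈ P.parts, ∃ i, p = m ^ i) ∧ Multiset.card P.parts = j}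

/-- If m^r n - 1 (with m ∤ n) has a partition into exactly j powers of m, then j ≥ (m-1)r. -/
theorem am_pos_imp (m j r n : ℕ) (hm : 2 ≤ m) (hj : 1 ≤ j) (hr : 1 ≤ r)
    (hn : 0 < n) (hnd : ¬ m ∣ n) (h : 1 ≤ am m j (m ^ r * n - 1)) :
    (m - 1) * r ≤ j := by
  have hne : Nonempty {P : (m ^ r * n - 1).Partition //
      (∀ p ∈ P.parts, ∃ i, p = m ^ i) ∧ Multiset.card P.parts = j} := by
    by_contra hne
    rw [not_nonempty_iff] at hne
    rw [am, Nat.card_of_isEmpty] at h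
    omega
  obtain ⟨⟨P, hpow, hcard⟩⟩ := hne
  have hge : 1 ≤ m ^ r * n :=
    Nat.one_le_iff_ne_zero.mpr (by positivity)
  have hsum : P.parts.sum + 1 = m ^ r * n := by
    rw [P.parts_sum]
    omega
  have := key_lemma m hm r P.parts hpow n hsum
  omega
end

section
/- Let m ≥ 2 and k ≥ 1. For every n ≥ km/(m-1), the number a_m(n-k, n) of partitions of n into exactly n-k powers of m equals Σ_{k/m ≤ j ≤ k/(m-1)} a_m(mj - k, j). In particular, if 1 ≤ k ≤ m-2 and n ≥ km/(m-1), then a_m(n-k, n) = 0, and for each fixed k the sequence (a_m(n-k,n))_n is eventually constant. -/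
namespace AmAux

variable {m k n : ℕ}

lemma k_le_n (hm : 2 ≤ m) (hn : k * m ≤ n * (m - 1)) : k ≤ n := by
  have h1 : n * (m - 1) ≤ n * m := Nat.mul_le_mul_left n (Nat.sub_le m 1)
  exact Nat.le_of_mul_le_mul_right (le_trans hn h1) (by omega)

lemma elem_facts (hm : 2 ≤ m) (p : ℕ) (hp : ∃ i, p = m ^ i) (hp1 : ¬ p = 1) :
    m ∣ p ∧ m ≤ p ∧ ∃ i, p / m = m ^ i := by
  obtain ⟨i, rfl⟩ := hp
  cases i with
  | zero => simp at hp1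
  | succ i =>
    refine ⟨dvd_pow_self m (Nat.succ_ne_zero i), Nat.le_self_pow (Nat.succ_ne_zero i) m,
      ⟨i, ?_⟩⟩
    rw [pow_succ, Nat.mul_div_cancel _ (by omega : 0 < m)]

/-- All the facts needed for the forward direction. -/
lemma forward (hm : 2 ≤ m) (hk : 1 ≤ k) (hn : k * m ≤ n * (m - 1))
    (P : n.Partition) (hpow : ∀ p ∈ P.parts, ∃ i, p = m ^ i)
    (hcard : Multiset.card P.parts = n - k)
    (b : Multiset ℕ) (hb : b = P.parts.filter (fun p => ¬ p = 1)) :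
    (b.sum / m ∈ (Finset.range (k + 1)).filter
        (fun j => k ≤ m * j ∧ (m - 1) * j ≤ k)) ∧
      (b.map (· / m)).sum = b.sum / m ∧
      (∀ q ∈ b.map (· / m), 0 < q) ∧
      (∀ q ∈ b.map (· / m), ∃ i, q = m ^ i) ∧
      Multiset.card (b.map (· / m)) = m * (b.sum / m) - k ∧
      P.parts = Multiset.replicate (n - m * (b.sum / m)) 1 + b := by
  have hm0 : 0 < m := by omega
  have hel : ∀ p ∈ b, m ∣ p ∧ m ≤ p ∧ ∃ i, p / m = m ^ i := by
    intro p hp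
    rw [hb, Multiset.mem_filter] at hp
    exact elem_facts hm p (hpow p hp.1) hp.2
  have hsplit : P.parts.filter (fun p => p = 1) + b = P.parts := by
    rw [hb]; exact Multiset.filter_add_not _ _
  have hones : P.parts.filter (fun p => p = 1) =
      Multiset.replicate (P.parts.count 1) 1 := Multiset.filter_eq' _ _
  set c := P.parts.count 1 with hc
  set S := b.sum with hSdef
  set j := Multiset.card b with hjdef
  have hsum : c + S = n := by
    have h := P.parts_sum
    rw [← hsplit, Multiset.sum_add, hones, Multiset.sum_replicate, smul_eq_mul,
      mul_one] at h
    exact h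
  have hcard2 : c + j = n - k := by
    have h := hcard
    rw [← hsplit, Multiset.card_add, hones, Multiset.card_replicate] at h
    exact h
  have hkn : k ≤ n := k_le_n hm hn
  have hS : S = j + k := by omega
  have hdS : m ∣ S := Multiset.dvd_sum (fun p hp => (hel p hp).1)
  have hmj : m * j ≤ S := by
    have h := Multiset.card_nsmul_le_sum (s := b) (a := m) (fun x hx => (hel x hx).2.1)
    rw [smul_eq_mul, mul_comm] at h
    exact h
  have h2j : 2 * j ≤ m * j := Nat.mul_le_mul_right j hm
  have h2k : 2 * k ≤ m * k := Nat.mul_le_mul_right k hm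
  have hSmk : S ≤ m * k := by omega
  set j' := S / m with hj'def
  have hmj' : m * j' = S := Nat.mul_div_cancel' hdS
  have hj'k : j' ≤ k := Nat.le_of_mul_le_mul_left (by omega) hm0
  have hjj' : j ≤ j' := Nat.le_of_mul_le_mul_left (by omega) hm0
  have hsub : (m - 1) * j' = m * j' - j' := by
    rw [Nat.sub_one_mul]
  refine ⟨?_, ?_, ?_, ?_, ?_, ?_⟩
  · rw [Finset.mem_filter, Finset.mem_range]
    exact ⟨by omega, by omega, by omega⟩
  · have h1 : (b.map (· / m)).sum * m = S := by
      rw [← Multiset.sum_map_mul_right]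
      rw [show b.map (fun i => i / m * m) = b.map id from
        Multiset.map_congr rfl (fun p hp => Nat.div_mul_cancel (hel p hp).1),
        Multiset.map_id]
    have h2 : (b.map (· / m)).sum * m = j' * m := by rw [h1, ← hmj', mul_comm]
    exact Nat.eq_of_mul_eq_mul_right hm0 h2
  · intro q hq
    obtain ⟨p, hp, rfl⟩ := Multiset.mem_map.1 hq
    exact Nat.div_pos (hel p hp).2.1 hm0
  · intro q hq
    obtain ⟨p, hp, rfl⟩ := Multiset.mem_map.1 hq
    exact (hel p hp).2.2
  · rw [Multiset.card_map]; omega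
  · rw [← hsplit, hones]
    congr 1
    congr 1
    omega

/-- All the facts needed for the backward direction. -/
lemma backward (hm : 2 ≤ m) (hk : 1 ≤ k) (hn : k * m ≤ n * (m - 1))
    (j' : ℕ) (hj2 : k ≤ m * j') (hj3 : (m - 1) * j' ≤ k)
    (Q : Nat.Partition j') (hQpow : ∀ p ∈ Q.parts, ∃ i, p = m ^ i)
    (hQcard : Multiset.card Q.parts = m * j' - k) :
    m * j' ≤ n ∧
      (Q.parts.map (· * m) + Multiset.replicate (n - m * j') 1).sum = n ∧
      (∀ p ∈ Q.parts.map (· * m) + Multiset.replicate (n - m * j') 1, 0 < p) ∧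
      (∀ p ∈ Q.parts.map (· * m) + Multiset.replicate (n - m * j') 1, ∃ i, p = m ^ i) ∧
      Multiset.card (Q.parts.map (· * m) + Multiset.replicate (n - m * j') 1) = n - k := by
  have hm0 : 0 < m := by omega
  have hmn : m * j' ≤ n := by
    have h : (m - 1) * (m * j') ≤ (m - 1) * n := by
      calc (m - 1) * (m * j') = m * ((m - 1) * j') := by ring
        _ ≤ m * k := Nat.mul_le_mul_left m hj3
        _ = k * m := mul_comm _ _
        _ ≤ n * (m - 1) := hn
        _ = (m - 1) * n := mul_comm _ _
    exact Nat.le_of_mul_le_mul_left h (by omega)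
  have hmap_sum : (Q.parts.map (· * m)).sum = j' * m := by
    rw [show Q.parts.map (· * m) = Q.parts.map (fun i => id i * m) from rfl,
      Multiset.sum_map_mul_right, Multiset.map_id, Q.parts_sum]
  refine ⟨hmn, ?_, ?_, ?_, ?_⟩
  · rw [Multiset.sum_add, hmap_sum, Multiset.sum_replicate, smul_eq_mul, mul_one]
    have : j' * m = m * j' := mul_comm _ _
    omega
  · intro p hp
    rcases Multiset.mem_add.1 hp with h | h
    · obtain ⟨q, hq, rfl⟩ := Multiset.mem_map.1 h
      exact Nat.mul_pos (Q.parts_pos hq) hm0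
    · rw [Multiset.eq_of_mem_replicate h]; omega
  · intro p hp
    rcases Multiset.mem_add.1 hp with h | h
    · obtain ⟨q, hq, rfl⟩ := Multiset.mem_map.1 h
      obtain ⟨i, rfl⟩ := hQpow q hq
      exact ⟨i + 1, (pow_succ m i).symm⟩
    · rw [Multiset.eq_of_mem_replicate h]; exact ⟨0, (pow_zero m).symm⟩
  · rw [Multiset.card_add, Multiset.card_map, hQcard, Multiset.card_replicate]
    omega

end AmAux

open AmAux in
theorem am_main (m k : ℕ) (hm : 2 ≤ m) (hk : 1 ≤ k) (n : ℕ) (hn : k * m ≤ n * (m - 1)) :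
    am m (n - k) n =
      ∑ j ∈ (Finset.range (k + 1)).filter (fun j => k ≤ m * j ∧ (m - 1) * j ≤ k),
        am m (m * j - k) j := by
  set F := (Finset.range (k + 1)).filter (fun j => k ≤ m * j ∧ (m - 1) * j ≤ k) with hF
  have hm0 : 0 < m := by omega
  -- the sigma-type equivalence
  let B : ℕ → Type := fun j =>
    {Q : Nat.Partition j // (∀ p ∈ Q.parts, ∃ i, p = m ^ i) ∧ Multiset.card Q.parts = m * j - k}
  have memF : ∀ j ∈ F, k ≤ m * j ∧ (m - 1) * j ≤ k := by
    intro j hj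
    rw [hF, Finset.mem_filter] at hj
    exact hj.2
  have sigma_ext : ∀ (j1 j2 : ℕ) (h1 : j1 ∈ F) (h2 : j2 ∈ F) (b1 : B j1) (b2 : B j2),
      j1 = j2 → b1.1.parts = b2.1.parts →
      (⟨⟨j1, h1⟩, b1⟩ : Σ j : F, B (j : ℕ)) = ⟨⟨j2, h2⟩, b2⟩ := by
    rintro j1 j2 h1 h2 b1 b2 rfl hp
    have : b1 = b2 := Subtype.ext (Nat.Partition.ext hp)
    rw [this]
  let e : {P : n.Partition //
        (∀ p ∈ P.parts, ∃ i, p = m ^ i) ∧ Multiset.card P.parts = n - k} ≃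
      Σ j : F, B (j : ℕ) :=
  { toFun := fun x =>
      ⟨⟨(x.1.parts.filter (fun p => ¬ p = 1)).sum / m,
        (forward hm hk hn x.1 x.2.1 x.2.2 _ rfl).1⟩,
       ⟨⟨(x.1.parts.filter (fun p => ¬ p = 1)).map (· / m),
          fun hq => (forward hm hk hn x.1 x.2.1 x.2.2 _ rfl).2.2.1 _ hq,
          (forward hm hk hn x.1 x.2.1 x.2.2 _ rfl).2.1⟩,
        (forward hm hk hn x.1 x.2.1 x.2.2 _ rfl).2.2.2.1,
        (forward hm hk hn x.1 x.2.1 x.2.2 _ rfl).2.2.2.2.1⟩⟩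
    invFun := fun y =>
      have hmem := memF y.1.1 y.1.2
      ⟨⟨y.2.1.parts.map (· * m) + Multiset.replicate (n - m * y.1.1) 1,
        fun hp => (backward hm hk hn y.1.1 hmem.1 hmem.2 y.2.1 y.2.2.1 y.2.2.2).2.2.1 _ hp,
        (backward hm hk hn y.1.1 hmem.1 hmem.2 y.2.1 y.2.2.1 y.2.2.2).2.1⟩,
       (backward hm hk hn y.1.1 hmem.1 hmem.2 y.2.1 y.2.2.1 y.2.2.2).2.2.2.1,
       (backward hm hk hn y.1.1 hmem.1 hmem.2 y.2.1 y.2.2.1 y.2.2.2).2.2.2.2⟩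
    left_inv := by
      rintro ⟨P, hpow, hcard⟩
      apply Subtype.ext
      apply Nat.Partition.ext
      show ((P.parts.filter (fun p => ¬ p = 1)).map (· / m)).map (· * m) +
          Multiset.replicate (n - m * ((P.parts.filter (fun p => ¬ p = 1)).sum / m)) 1
          = P.parts
      obtain ⟨-, -, -, -, -, hparts⟩ := forward hm hk hn P hpow hcard _ rfl
      have hel : ∀ p ∈ P.parts.filter (fun p => ¬ p = 1), m ∣ p := by
        intro p hp
        rw [Multiset.mem_filter] at hp
        exact (elem_facts hm p (hpow p hp.1) hp.2).1
      rw [Multiset.map_map]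
      rw [show (P.parts.filter (fun p => ¬ p = 1)).map ((· * m) ∘ (· / m)) =
          (P.parts.filter (fun p => ¬ p = 1)).map id from
        Multiset.map_congr rfl (fun p hp => Nat.div_mul_cancel (hel p hp)),
        Multiset.map_id]
      conv_rhs => rw [hparts]
      exact add_comm _ _
    right_inv := by
      rintro ⟨⟨j', hj'⟩, Q, hQpow, hQcard⟩
      have hmem := memF j' hj'
      obtain ⟨hmn, -, -, -, -⟩ :=
        backward hm hk hn j' hmem.1 hmem.2 Q hQpow hQcard
      have hfil : (Q.parts.map (· * m) + Multiset.replicate (n - m * j') 1).filter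
          (fun p => ¬ p = 1) = Q.parts.map (· * m) := by
        rw [Multiset.filter_add]
        rw [Multiset.filter_eq_self.2 (fun p hp => by
          obtain ⟨q, hq, rfl⟩ := Multiset.mem_map.1 hp
          have := Q.parts_pos hq
          have : m ≤ q * m := Nat.le_mul_of_pos_left m this
          omega)]
        rw [Multiset.filter_eq_nil.2 (fun p hp => by
          rw [Multiset.eq_of_mem_replicate hp]; simp), add_zero]
      have hsum : (Q.parts.map (· * m)).sum = j' * m := by
        rw [show Q.parts.map (· * m) = Q.parts.map (fun i => id i * m) from rfl,
          Multiset.sum_map_mul_right, Multiset.map_id, Q.parts_sum]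
      apply sigma_ext
      · show ((Q.parts.map (· * m) + Multiset.replicate (n - m * j') 1).filter
            (fun p => ¬ p = 1)).sum / m = j'
        rw [hfil, hsum, Nat.mul_div_cancel j' hm0]
      · show ((Q.parts.map (· * m) + Multiset.replicate (n - m * j') 1).filter
            (fun p => ¬ p = 1)).map (· / m) = Q.parts
        rw [hfil, Multiset.map_map]
        rw [show Q.parts.map ((· / m) ∘ (· * m)) = Q.parts.map id from
          Multiset.map_congr rfl (fun q _ => Nat.mul_div_cancel q hm0), Multiset.map_id] }
  classical
  have hcongr := Nat.card_congr e
  rw [show am m (n - k) n = Nat.card {P : n.Partition //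
      (∀ p ∈ P.parts, ∃ i, p = m ^ i) ∧ Multiset.card P.parts = n - k} from rfl, hcongr]
  haveI : ∀ j : ℕ, Fintype (B j) := fun j => Fintype.ofFinite _
  rw [Nat.card_eq_fintype_card, Fintype.card_sigma]
  rw [show (∑ j ∈ F, am m (m * j - k) j) = ∑ j ∈ F, Nat.card (B j) from rfl]
  rw [← Finset.sum_coe_sort F (fun j => Nat.card (B j))]
  exact Finset.sum_congr rfl (fun j _ => (Nat.card_eq_fintype_card).symm)

/-- For n ≥ km/(m-1), a_m(n-k, n) = Σ_{k/m ≤ j ≤ k/(m-1)} a_m(mj-k, j); in particular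
it vanishes for 1 ≤ k ≤ m-2 and is eventually constant in n. -/
theorem am_top_coefficients (m k : ℕ) (hm : 2 ≤ m) (hk : 1 ≤ k) :
    (∀ n : ℕ, k * m ≤ n * (m - 1) →
        am m (n - k) n =
          ∑ j ∈ (Finset.range (k + 1)).filter (fun j => k ≤ m * j ∧ (m - 1) * j ≤ k),
            am m (m * j - k) j) ∧
    (k ≤ m - 2 → ∀ n : ℕ, k * m ≤ n * (m - 1) → am m (n - k) n = 0) ∧
    (∃ c : ℕ, ∀ n : ℕ, k * m ≤ n * (m - 1) → am m (n - k) n = c) := by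
  refine ⟨fun n hn => am_main m k hm hk n hn, ?_, ?_⟩
  · intro hkm n hn
    rw [am_main m k hm hk n hn]
    apply Finset.sum_eq_zero
    intro j hj
    rw [Finset.mem_filter] at hj
    obtain ⟨-, h1, h2⟩ := hj
    exfalso
    rcases Nat.eq_zero_or_pos j with rfl | hj0
    · omega
    · have : (m - 1) * 1 ≤ (m - 1) * j := Nat.mul_le_mul_left _ hj0
      omega
  · exact ⟨_, fun n hn => am_main m k hm hk n hn⟩
end
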